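/- arXiv:1212.3134 — 9 statements merged into one kernel-verified Lean document; each statement's English description precedes it below -/
import Mathlib

section
/- For any n×n complex matrix A, the numerical range W(A) equals the set of traces tr(AX) where X ranges over all n×n density matrices (positive semidefinite matrices with trace one). -/
open Matrix Kronecker
open scoped ComplexOrder

noncomputable def numRange {n : Type*} [Fintype n] (A : Matrix n n ℂ) : Set ℂ :=
  {z | ∃ u : n → ℂ, dotProduct (star u) u = 1 ∧ z = dotProduct (star u) (A.mulVec u)}

noncomputable def numRadius {n : Type*} [Fintype n] (A : Matrix n n ℂ) : ℝ :=
  sSup {r | ∃ z ∈ numRange A, r = ‖z‖}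

set_option linter.unusedSectionVars false

namespace NumRangeAux

variable {n : Type*} [Fintype n] [DecidableEq n]

lemma trace_mul_vecMulVec (A : Matrix n n ℂ) (u : n → ℂ) :
    (A * vecMulVec u (star u)).trace = dotProduct (star u) (A.mulVec u) := by
  simp only [Matrix.trace, Matrix.diag_apply, Matrix.mul_apply, Matrix.vecMulVec_apply,
    dotProduct, Matrix.mulVec, Pi.star_apply, Finset.mul_sum]
  exact Finset.sum_congr rfl fun i _ => Finset.sum_congr rfl fun j _ => by ring

lemma trace_vecMulVec (u : n → ℂ) :
    (vecMulVec u (star u)).trace = dotProduct (star u) u := by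
  simp only [Matrix.trace, Matrix.diag_apply, Matrix.vecMulVec_apply, dotProduct,
    Pi.star_apply]
  exact Finset.sum_congr rfl fun i _ => by ring

lemma posSemidef_vecMulVec (u : n → ℂ) : (vecMulVec u (star u)).PosSemidef := by
  rw [Matrix.posSemidef_iff_dotProduct_mulVec]
  constructor
  · ext i j
    simp [Matrix.vecMulVec_apply, Matrix.conjTranspose_apply, mul_comm]
  · intro x
    have h : dotProduct (star x) ((vecMulVec u (star u)).mulVec x)
        = star (dotProduct (star u) x) * (dotProduct (star u) x) := by
      simp only [dotProduct, Matrix.mulVec, Matrix.vecMulVec_apply, Pi.star_apply,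
        star_sum, star_mul', star_star, Finset.sum_mul_sum, Finset.mul_sum, Finset.sum_mul]
      rw [Finset.sum_comm]
      exact Finset.sum_congr rfl fun i _ => Finset.sum_congr rfl fun j _ => by ring
    rw [h]
    exact star_mul_self_nonneg _

lemma star_dot (x y : n → ℂ) :
    starRingEnd ℂ (dotProduct (star x) y) = dotProduct (star y) x := by
  simp only [dotProduct, map_sum]
  exact Finset.sum_congr rfl fun i _ => by simp [Complex.star_def, mul_comm]

lemma expand (M : Matrix n n ℂ) (x y : n → ℂ) (c d : ℂ) :
    dotProduct (star (c • x + d • y)) (M.mulVec (c • x + d • y)) =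
      starRingEnd ℂ c * c * dotProduct (star x) (M.mulVec x)
      + starRingEnd ℂ c * d * dotProduct (star x) (M.mulVec y)
      + starRingEnd ℂ d * c * dotProduct (star y) (M.mulVec x)
      + starRingEnd ℂ d * d * dotProduct (star y) (M.mulVec y) := by
  simp only [Matrix.mulVec_add, Matrix.mulVec_smul, star_add, star_smul,
    add_dotProduct, dotProduct_add, smul_dotProduct,
    dotProduct_smul, smul_eq_mul, Complex.star_def]
  ring

lemma expand_dot (x y : n → ℂ) (c d : ℂ) :
    dotProduct (star (c • x + d • y)) (c • x + d • y) =
      starRingEnd ℂ c * c * dotProduct (star x) x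
      + starRingEnd ℂ c * d * dotProduct (star x) y
      + starRingEnd ℂ d * c * dotProduct (star y) x
      + starRingEnd ℂ d * d * dotProduct (star y) y := by
  have := expand (1 : Matrix n n ℂ) x y c d
  simpa only [Matrix.one_mulVec] using this

/-- Core of the Toeplitz–Hausdorff theorem: if a quadratic form attains 0 and 1 on
unit vectors, it attains every `t ∈ [0,1]` on a unit vector. -/
lemma core (B : Matrix n n ℂ) (u v : n → ℂ)
    (hu : dotProduct (star u) u = 1) (hv : dotProduct (star v) v = 1)
    (hBu : dotProduct (star u) (B.mulVec u) = 1)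
    (hBv : dotProduct (star v) (B.mulVec v) = 0)
    {t : ℝ} (ht0 : 0 ≤ t) (ht1 : t ≤ 1) :
    ∃ w : n → ℂ, dotProduct (star w) w = 1 ∧
      dotProduct (star w) (B.mulVec w) = (t : ℂ) := by
  classical
  set a := dotProduct (star u) (B.mulVec v) with ha
  set b := dotProduct (star v) (B.mulVec u) with hb
  set e := a - starRingEnd ℂ b with he
  -- choose a phase ζ with |ζ| = 1 and (conj ζ * e).im = 0
  obtain ⟨ζ, hζ1, hζ2⟩ : ∃ ζ : ℂ, starRingEnd ℂ ζ * ζ = 1 ∧ (starRingEnd ℂ ζ * e).im = 0 := by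
    by_cases h : e = 0
    · exact ⟨1, by simp, by simp [h]⟩
    · set ρ : ℝ := ‖e‖ with hρdef
      have hρ : (ρ : ℂ) ≠ 0 := by
        simp only [hρdef, ne_eq, Complex.ofReal_eq_zero]
        exact norm_ne_zero_iff.mpr h
      have hnorm : starRingEnd ℂ e * e = ((ρ : ℂ)) ^ 2 := by
        rw [mul_comm, Complex.mul_conj, hρdef]
        rw [Complex.normSq_eq_norm_sq]
        push_cast
        ring
      refine ⟨e / (ρ : ℂ), ?_, ?_⟩
      · rw [map_div₀, Complex.conj_ofReal, div_mul_div_comm, hnorm, sq]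
        exact div_self (mul_ne_zero hρ hρ)
      · rw [map_div₀, Complex.conj_ofReal, div_mul_eq_mul_div, hnorm, sq,
          mul_div_assoc, div_self hρ, mul_one]
        simp
  set u' := ζ • u with hu'def
  have hu' : dotProduct (star u') u' = 1 := by
    simp only [hu'def, star_smul, smul_dotProduct, dotProduct_smul, smul_eq_mul,
      Complex.star_def, hu]
    linear_combination hζ1
  have hBu' : dotProduct (star u') (B.mulVec u') = 1 := by
    simp only [hu'def, star_smul, Matrix.mulVec_smul, smul_dotProduct,
      dotProduct_smul, smul_eq_mul, Complex.star_def, hBu]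
    linear_combination hζ1
  set r := starRingEnd ℂ ζ * a + ζ * b with hr
  have hrIm : r.im = 0 := by
    have h1 : r = starRingEnd ℂ ζ * e + (ζ * b + starRingEnd ℂ (ζ * b)) := by
      simp only [hr, he, _root_.map_mul]
      ring
    rw [h1, Complex.add_im, hζ2, zero_add, Complex.add_im, Complex.conj_im]
    ring
  set m := dotProduct (star u') v + dotProduct (star v) u' with hm
  have hmIm : m.im = 0 := by
    have h1 : dotProduct (star v) u' = starRingEnd ℂ (dotProduct (star u') v) :=
      (star_dot u' v).symm
    rw [hm, h1, Complex.add_im, Complex.conj_im]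
    ring
  -- cross terms of B w.r.t. u' and v
  have ha' : dotProduct (star u') (B.mulVec v) = starRingEnd ℂ ζ * a := by
    simp [hu'def, star_smul, smul_dotProduct, smul_eq_mul, Complex.star_def, ha]
  have hb' : dotProduct (star v) (B.mulVec u') = ζ * b := by
    simp [hu'def, Matrix.mulVec_smul, dotProduct_smul, smul_eq_mul, hb]
  -- the path of vectors
  set w : ℝ → (n → ℂ) := fun s => (s : ℂ) • u' + ((1 - s : ℝ) : ℂ) • v with hwdef
  set p : ℝ → ℝ := fun s => s ^ 2 + s * (1 - s) * r.re with hp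
  set q : ℝ → ℝ := fun s => s ^ 2 + (1 - s) ^ 2 + s * (1 - s) * m.re with hq
  have hrre : (r.re : ℂ) = r := by
    exact Complex.ext (by simp) (by simp [hrIm])
  have hmre : (m.re : ℂ) = m := by
    exact Complex.ext (by simp) (by simp [hmIm])
  have hS : ∀ s : ℝ, dotProduct (star (w s)) (B.mulVec (w s)) = ((p s : ℝ) : ℂ) := by
    intro s
    rw [hwdef]
    rw [expand B u' v (s : ℂ) ((1 - s : ℝ) : ℂ)]
    rw [Complex.conj_ofReal, Complex.conj_ofReal, hBu', hBv, ha', hb']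
    rw [hp]
    push_cast
    linear_combination (-(s : ℂ) * (1 - (s : ℂ))) * hrre + (-(s : ℂ) * (1 - (s : ℂ))) * hr
  have hN : ∀ s : ℝ, dotProduct (star (w s)) (w s) = ((q s : ℝ) : ℂ) := by
    intro s
    rw [hwdef]
    rw [expand_dot u' v (s : ℂ) ((1 - s : ℝ) : ℂ)]
    rw [Complex.conj_ofReal, Complex.conj_ofReal, hu', hv]
    rw [hq]
    push_cast
    linear_combination (-(s : ℂ) * (1 - (s : ℂ))) * hmre + (-(s : ℂ) * (1 - (s : ℂ))) * hm
  -- the path vector is nonzero on [0,1]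
  have hwne : ∀ s : ℝ, 0 ≤ s → s ≤ 1 → w s ≠ 0 := by
    intro s hs0 hs1 hws
    rcases eq_or_lt_of_le hs0 with h0 | h0
    · -- s = 0 : v = 0
      have hv0 : v = 0 := by
        funext i
        have hi := congrFun hws i
        simp only [hwdef, Pi.add_apply, Pi.smul_apply, smul_eq_mul, Pi.zero_apply] at hi ⊢
        rw [← h0] at hi
        simpa using hi
      rw [hv0] at hv
      simp at hv
    rcases eq_or_lt_of_le hs1 with h1 | h1
    · -- s = 1 : u' = 0
      have hu0 : u' = 0 := by
        funext i
        have hi := congrFun hws i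
        simp only [hwdef, Pi.add_apply, Pi.smul_apply, smul_eq_mul, Pi.zero_apply] at hi ⊢
        rw [h1] at hi
        simpa using hi
      rw [hu0] at hu'
      simp at hu'
    · -- 0 < s < 1 : v is a multiple of u'
      have h1s : ((1 - s : ℝ) : ℂ) ≠ 0 := by
        simp only [ne_eq, Complex.ofReal_eq_zero]
        linarith
      set γ : ℂ := -(s : ℂ) / ((1 - s : ℝ) : ℂ) with hγ
      have hveq : v = γ • u' := by
        funext i
        have hi := congrFun hws i
        simp only [hwdef, Pi.add_apply, Pi.smul_apply, smul_eq_mul, Pi.zero_apply] at hi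
        simp only [Pi.smul_apply, smul_eq_mul, hγ]
        rw [div_mul_eq_mul_div, eq_div_iff h1s]
        linear_combination hi
      have hγconj : starRingEnd ℂ γ = γ := by
        rw [hγ, map_div₀, map_neg, Complex.conj_ofReal, Complex.conj_ofReal]
      have h0' : (0 : ℂ) = γ * γ := by
        rw [← hBv, hveq]
        simp only [star_smul, Matrix.mulVec_smul, smul_dotProduct,
          dotProduct_smul, smul_eq_mul, Complex.star_def, hγconj, hBu']
        ring
      have hγ0 : γ = 0 := mul_self_eq_zero.mp h0'.symm
      rw [hγ] at hγ0
      have hsc : (s : ℂ) = 0 := by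
        rw [div_eq_zero_iff] at hγ0
        rcases hγ0 with h | h
        · simpa using h
        · exact absurd h h1s
      have : s = 0 := by exact_mod_cast hsc
      linarith
  have hqpos : ∀ s ∈ Set.Icc (0 : ℝ) 1, 0 < q s := by
    intro s hs
    have h1 : (0 : ℂ) ≤ dotProduct (star (w s)) (w s) :=
      dotProduct_star_self_nonneg _
    rw [hN s] at h1
    have h2 : dotProduct (star (w s)) (w s) ≠ 0 := by
      rw [ne_eq, dotProduct_star_self_eq_zero]
      exact hwne s hs.1 hs.2
    rw [hN s] at h2
    have h3 : 0 ≤ q s := by exact_mod_cast h1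
    have h4 : q s ≠ 0 := fun h => h2 (by rw [h]; simp)
    exact lt_of_le_of_ne h3 (Ne.symm h4)
  -- the real function g = p / q
  set g : ℝ → ℝ := fun s => p s / q s with hg
  have hgc : ContinuousOn g (Set.Icc (0 : ℝ) 1) := by
    have hpc : Continuous p := by
      rw [hp]; fun_prop
    have hqc : Continuous q := by
      rw [hq]; fun_prop
    exact ContinuousOn.div hpc.continuousOn hqc.continuousOn fun s hs => (hqpos s hs).ne'
  have hg0 : g 0 = 0 := by simp [hg, hp, hq]
  have hg1 : g 1 = 1 := by simp [hg, hp, hq]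
  have hsub : Set.Icc (g 0) (g 1) ⊆ g '' Set.Icc 0 1 :=
    intermediate_value_Icc (by norm_num) hgc
  have htmem : t ∈ Set.Icc (g 0) (g 1) := by
    rw [hg0, hg1]; exact ⟨ht0, ht1⟩
  obtain ⟨s₀, hs₀, hgs₀⟩ := hsub htmem
  -- normalize
  have hq0 : 0 < q s₀ := hqpos s₀ hs₀
  set α : ℝ := (Real.sqrt (q s₀))⁻¹ with hα
  have hα2 : α ^ 2 * q s₀ = 1 := by
    rw [hα, inv_pow, Real.sq_sqrt hq0.le]
    exact inv_mul_cancel₀ hq0.ne'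
  refine ⟨(α : ℂ) • w s₀, ?_, ?_⟩
  · simp only [star_smul, smul_dotProduct, dotProduct_smul, smul_eq_mul,
      Complex.star_def, Complex.conj_ofReal, hN s₀]
    have hc := congrArg (fun x : ℝ => (x : ℂ)) hα2
    push_cast at hc
    linear_combination hc
  · simp only [star_smul, Matrix.mulVec_smul, smul_dotProduct, dotProduct_smul,
      smul_eq_mul, Complex.star_def, Complex.conj_ofReal, hS s₀]
    have hreal : α ^ 2 * p s₀ = t := by
      rw [hα, inv_pow, Real.sq_sqrt hq0.le, inv_mul_eq_div]
      exact hgs₀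
    have hc := congrArg (fun x : ℝ => (x : ℂ)) hreal
    push_cast at hc
    linear_combination hc

lemma convex_numRange (A : Matrix n n ℂ) : Convex ℝ (numRange A) := by
  intro x hx y hy α β hα hβ hαβ
  obtain ⟨u, hu, hxu⟩ := hx
  obtain ⟨v, hv, hyv⟩ := hy
  by_cases hxy : x = y
  · rw [hxy, ← add_smul, hαβ, one_smul]
    exact ⟨v, hv, hyv⟩
  · have hne : x - y ≠ 0 := sub_ne_zero.mpr hxy
    set B := (x - y)⁻¹ • (A - y • (1 : Matrix n n ℂ)) with hB
    have key : ∀ w : n → ℂ, dotProduct (star w) (B.mulVec w)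
        = (x - y)⁻¹ * (dotProduct (star w) (A.mulVec w)
          - y * dotProduct (star w) w) := by
      intro w
      rw [hB]
      rw [Matrix.smul_mulVec, Matrix.sub_mulVec, Matrix.smul_mulVec,
        Matrix.one_mulVec]
      rw [dotProduct_smul, dotProduct_sub, dotProduct_smul]
      simp [smul_eq_mul, mul_sub]
    have hBu : dotProduct (star u) (B.mulVec u) = 1 := by
      rw [key u, hu, ← hxu, mul_one]
      exact inv_mul_cancel₀ hne
    have hBv : dotProduct (star v) (B.mulVec v) = 0 := by
      rw [key v, hv, ← hyv, mul_one, sub_self, mul_zero]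
    have hα1 : α ≤ 1 := by linarith
    obtain ⟨w, hw1, hw2⟩ := core B u v hu hv hBu hBv hα hα1
    refine ⟨w, hw1, ?_⟩
    have h := key w
    rw [hw2, hw1, mul_one] at h
    field_simp at h
    have hcast : (α : ℂ) + (β : ℂ) = 1 := by exact_mod_cast hαβ
    rw [Complex.real_smul, Complex.real_smul]
    linear_combination h + y * hcast

end NumRangeAux

theorem numRange_eq_traces (n : ℕ) (A : Matrix (Fin n) (Fin n) ℂ) :
    numRange A =
      {z | ∃ X : Matrix (Fin n) (Fin n) ℂ, X.PosSemidef ∧ X.trace = 1 ∧ z = (A * X).trace} := by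
  classical
  ext z
  constructor
  · rintro ⟨u, hu, rfl⟩
    refine ⟨vecMulVec u (star u), NumRangeAux.posSemidef_vecMulVec u, ?_, ?_⟩
    · rw [NumRangeAux.trace_vecMulVec, hu]
    · rw [NumRangeAux.trace_mul_vecMulVec]
  · rintro ⟨X, hX, htr, rfl⟩
    have hH : X.IsHermitian := hX.1
    set lam := hH.eigenvalues with hlam
    set v : Fin n → (Fin n → ℂ) := fun k => ⇑(hH.eigenvectorBasis k) with hvdef
    -- unit vectors
    have hunit : ∀ k, dotProduct (star (v k)) (v k) = 1 := by
      intro k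
      have h1 : (inner ℂ (hH.eigenvectorBasis k) (hH.eigenvectorBasis k) : ℂ) = 1 := by
        rw [inner_self_eq_norm_sq_to_K, hH.eigenvectorBasis.orthonormal.1 k]
        norm_num
      rw [EuclideanSpace.inner_eq_star_dotProduct, dotProduct_comm] at h1
      exact h1
    -- spectral decomposition as a sum of rank-one projections
    have hdecomp : X = ∑ k, (lam k : ℂ) • vecMulVec (v k) (star (v k)) := by
      ext i j
      conv_lhs => rw [hH.spectral_theorem]
      simp only [Unitary.conjStarAlgAut_apply, Matrix.mul_apply, Matrix.diagonal_apply, Function.comp_apply,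
        Matrix.star_apply, Matrix.sum_apply, Matrix.smul_apply, Pi.smul_apply,
        Matrix.vecMulVec_apply, smul_eq_mul,
        Matrix.IsHermitian.eigenvectorUnitary_apply, Pi.star_apply, Complex.star_def]
      refine Finset.sum_congr rfl fun k _ => ?_
      rw [Finset.sum_eq_single k (fun l _ hl => by simp [if_neg hl]) (by simp)]
      simp only [hvdef, hlam, if_true]
      rw [mul_right_comm, mul_comm]
      rfl
    -- trace of X is the sum of eigenvalues
    have hsumc : (∑ k, (lam k : ℂ)) = 1 := by
      have : X.trace = ∑ k, (lam k : ℂ) := by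
        rw [hdecomp, Matrix.trace_sum]
        refine Finset.sum_congr rfl fun k _ => ?_
        rw [Matrix.trace_smul, NumRangeAux.trace_vecMulVec, hunit k, smul_eq_mul, mul_one]
      rw [← this, htr]
    have hsum : (∑ k, lam k) = 1 := by
      have : ((∑ k, lam k : ℝ) : ℂ) = 1 := by push_cast; exact hsumc
      exact_mod_cast this
    have hnn : ∀ k, 0 ≤ lam k := fun k => hX.eigenvalues_nonneg k
    -- trace (A * X) is the convex combination of the quadratic-form values
    have htrace : (A * X).trace
        = ∑ k, lam k • dotProduct (star (v k)) (A.mulVec (v k)) := by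
      rw [hdecomp, Matrix.mul_sum, Matrix.trace_sum]
      refine Finset.sum_congr rfl fun k _ => ?_
      rw [Matrix.mul_smul, Matrix.trace_smul, NumRangeAux.trace_mul_vecMulVec]
      rw [smul_eq_mul, Complex.real_smul]
    rw [htrace]
    exact (NumRangeAux.convex_numRange A).sum_mem (fun k _ => hnn k) hsum
      (fun k _ => ⟨v k, hunit k, rfl⟩)
end

section
/- Let A ∈ M_n(ℂ) with numerical radius w(A) = 1, and suppose x is a unit vector with |x*Ax| = 1. Then for any unitary U ∈ M_n whose first column is x, writing U*AU in block form with (1,1)-entry scalar, we have U*AU = (x*Ax)·[[1, y*],[-y, B]] for some y ∈ ℂ^{n-1} and some B ∈ M_{n-1}. -/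
open Matrix Kronecker

lemma aux_conj_dot {m : Type*} [Fintype m] (U A : Matrix m m ℂ) (v : m → ℂ) :
    dotProduct (star v) ((Uᴴ * A * U).mulVec v)
      = dotProduct (star (U.mulVec v)) (A.mulVec (U.mulVec v)) := by
  rw [Matrix.star_mulVec, Matrix.mulVec_mulVec, Matrix.dotProduct_mulVec,
    Matrix.dotProduct_mulVec, Matrix.vecMul_vecMul, Matrix.mul_assoc]

lemma aux_star_single {m : Type*} [Fintype m] [DecidableEq m] (i : m) (a : ℂ) :
    star (Pi.single i a : m → ℂ) = (Pi.single i (star a) : m → ℂ) := by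
  funext k
  simp only [Pi.star_apply]
  rw [Pi.single_apply, Pi.single_apply]
  split <;> simp

lemma aux_re_zero (c s d : ℂ) (hc : ‖c‖ = 1)
    (h : ∀ t : ℝ, ‖c + (t:ℂ)*s + (t:ℂ)^2*d‖ ≤ 1 + t^2) :
    c.re*s.re + c.im*s.im = 0 := by
  have hc2 : c.re^2 + c.im^2 = 1 := by
    have := Complex.sq_norm c
    rw [hc] at this
    simpa [Complex.normSq_apply, sq] using this.symm
  set F : ℝ → ℝ := fun t =>
    (1+t^2)^2 - ((c.re + (t*s.re + t^2*d.re))^2 + (c.im + (t*s.im + t^2*d.im))^2) with hF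
  have hF0 : F 0 = 0 := by simp [hF]; nlinarith
  have hFnn : ∀ t, 0 ≤ F t := by
    intro t
    have h1 := h t
    have h2 : ‖c + (t:ℂ)*s + (t:ℂ)^2*d‖ ^ 2 ≤ (1 + t^2)^2 :=
      pow_le_pow_left₀ (norm_nonneg _) h1 2
    rw [Complex.sq_norm, Complex.normSq_apply] at h2
    have hre : (c + (t:ℂ)*s + (t:ℂ)^2*d).re = c.re + (t*s.re + t^2*d.re) := by
      simp [← Complex.ofReal_pow]
      ring
    have him : (c + (t:ℂ)*s + (t:ℂ)^2*d).im = c.im + (t*s.im + t^2*d.im) := by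
      simp [← Complex.ofReal_pow]
      ring
    rw [hre, him] at h2
    simp only [hF]
    nlinarith [h2]
  have hmin : IsLocalMin F 0 :=
    Filter.Eventually.of_forall fun t => hF0.trans_le (hFnn t)
  have a1 : HasDerivAt (fun t : ℝ => t*s.re + t^2*d.re) s.re 0 := by
    simpa using ((hasDerivAt_id (0:ℝ)).mul_const s.re).fun_add
      ((hasDerivAt_pow 2 (0:ℝ)).mul_const d.re)
  have a2 : HasDerivAt (fun t : ℝ => t*s.im + t^2*d.im) s.im 0 := by
    simpa using ((hasDerivAt_id (0:ℝ)).mul_const s.im).fun_add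
      ((hasDerivAt_pow 2 (0:ℝ)).mul_const d.im)
  have q1 : HasDerivAt (fun t : ℝ => (c.re + (t*s.re + t^2*d.re))^2) (2*c.re*s.re) 0 := by
    simpa [mul_comm] using (a1.const_add c.re).fun_pow 2
  have q2 : HasDerivAt (fun t : ℝ => (c.im + (t*s.im + t^2*d.im))^2) (2*c.im*s.im) 0 := by
    simpa [mul_comm] using (a2.const_add c.im).fun_pow 2
  have g : HasDerivAt (fun t : ℝ => (1+t^2)^2) 0 0 := by
    simpa using ((hasDerivAt_pow 2 (0:ℝ)).const_add 1).fun_pow 2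
  have hd : HasDerivAt F (0 - (2*c.re*s.re + 2*c.im*s.im)) 0 := g.sub (q1.add q2)
  have := hmin.hasDerivAt_eq_zero hd
  linarith

theorem block_form_of_radius_attained (n : ℕ) (A : Matrix (Fin (n + 1)) (Fin (n + 1)) ℂ)
    (hA : numRadius A = 1) (x : Fin (n + 1) → ℂ)
    (hx : dotProduct (star x) x = 1)
    (hxA : ‖dotProduct (star x) (A.mulVec x)‖ = 1)
    (U : Matrix (Fin (n + 1)) (Fin (n + 1)) ℂ)
    (hU : U ∈ Matrix.unitaryGroup (Fin (n + 1)) ℂ)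
    (hUx : ∀ i, U i 0 = x i) :
    ∃ (y : Fin n → ℂ) (B : Matrix (Fin n) (Fin n) ℂ),
      let c := dotProduct (star x) (A.mulVec x)
      let M := Uᴴ * A * U
      M 0 0 = c ∧
      (∀ j : Fin n, M 0 j.succ = c * star (y j)) ∧
      (∀ i : Fin n, M i.succ 0 = c * (- y i)) ∧
      (∀ i j : Fin n, M i.succ j.succ = c * B i j) := by
  have hcc : (dotProduct (star x) (A.mulVec x)) *
      (starRingEnd ℂ) (dotProduct (star x) (A.mulVec x)) = 1 := by
    rw [Complex.mul_conj]
    norm_cast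
    rw [← Complex.sq_norm, hxA]; norm_num
  set c := dotProduct (star x) (A.mulVec x) with hc
  set M := Uᴴ * A * U with hMdef
  have hbA : ∀ u : Fin (n+1) → ℂ, dotProduct (star u) u = 1 →
      ‖dotProduct (star u) (A.mulVec u)‖ ≤ 1 := by
    intro u hu
    have hmem : ‖dotProduct (star u) (A.mulVec u)‖ ∈
        {r | ∃ z ∈ numRange A, r = ‖z‖} := ⟨_, ⟨u, hu, rfl⟩, rfl⟩
    have hbdd : BddAbove {r | ∃ z ∈ numRange A, r = ‖z‖} := by
      by_contra hb
      rw [numRadius, Real.sSup_of_not_bddAbove hb] at hA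
      norm_num at hA
    calc ‖dotProduct (star u) (A.mulVec u)‖
        ≤ numRadius A := le_csSup hbdd hmem
      _ = 1 := hA
  have hU1 : Uᴴ * U = 1 := by
    have := (Unitary.mem_iff.mp hU).1
    rwa [Matrix.star_eq_conjTranspose] at this
  have hbM : ∀ u : Fin (n+1) → ℂ, dotProduct (star u) u = 1 →
      ‖dotProduct (star u) (M.mulVec u)‖ ≤ 1 := by
    intro u hu
    have hnorm : dotProduct (star (U.mulVec u)) (U.mulVec u) = 1 := by
      have := aux_conj_dot U 1 u
      rw [Matrix.mul_one, hU1] at this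
      simpa [Matrix.one_mulVec, hu] using this.symm
    have := hbA (U.mulVec u) hnorm
    rwa [← aux_conj_dot U A u] at this
  have hM00 : M 0 0 = c := by
    have h1 := aux_conj_dot U A (Pi.single (0 : Fin (n+1)) 1)
    have hUe : U.mulVec (Pi.single (0 : Fin (n+1)) 1) = x := by
      funext i
      simp [Matrix.mulVec_single, hUx]
    rw [hUe] at h1
    have h2 : dotProduct (star (Pi.single (0:Fin (n+1)) 1))
        ((Uᴴ*A*U).mulVec (Pi.single 0 1)) = (Uᴴ*A*U) 0 0 := by
      rw [aux_star_single]
      simp [Matrix.mulVec_single, single_dotProduct]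
    rw [hMdef, ← h2, h1, hc]
  have hkey : ∀ (j : Fin n) (ω : ℂ), ω * (starRingEnd ℂ) ω = 1 →
      c.re * (ω * M 0 j.succ + (starRingEnd ℂ) ω * M j.succ 0).re
      + c.im * (ω * M 0 j.succ + (starRingEnd ℂ) ω * M j.succ 0).im = 0 := by
    intro j ω hω
    set s := ω * M 0 j.succ + (starRingEnd ℂ) ω * M j.succ 0 with hs
    set d := M j.succ j.succ with hd
    apply aux_re_zero c s d hxA
    intro t
    set v : Fin (n+1) → ℂ :=
      Pi.single 0 1 + Pi.single j.succ ((t:ℂ) * ω) with hv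
    have hsv : star v = Pi.single 0 1 + Pi.single j.succ ((starRingEnd ℂ) ((t:ℂ) * ω)) := by
      rw [hv, star_add, aux_star_single, aux_star_single]
      simp
    have hjne : (j.succ : Fin (n+1)) ≠ 0 := Fin.succ_ne_zero j
    have hvv : dotProduct (star v) v = ((1 + t^2 : ℝ) : ℂ) := by
      rw [hsv, hv]
      simp [dotProduct_add, add_dotProduct, dotProduct_single,
        single_dotProduct, Pi.single_apply, hjne, hjne.symm, _root_.map_mul,
        Complex.conj_ofReal]
      push_cast
      linear_combination ((t:ℂ))^2 * hω
    have hvMv : dotProduct (star v) (M.mulVec v)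
        = c + (t:ℂ)*s + (t:ℂ)^2*d := by
      rw [hsv, hv]
      simp [Matrix.mulVec_add, Matrix.mulVec_single, dotProduct_add,
        add_dotProduct, dotProduct_single, single_dotProduct,
        Pi.single_apply, hjne, hjne.symm, hs, hd, hM00, _root_.map_mul,
        Complex.conj_ofReal]
      push_cast
      linear_combination ((t:ℂ)^2 * M j.succ j.succ) * hω
    have hpos : (0:ℝ) < 1 + t^2 := by positivity
    set r : ℝ := Real.sqrt (1 + t^2) with hr
    have hrpos : 0 < r := Real.sqrt_pos.mpr hpos
    have hr2 : (r:ℝ)^2 = 1 + t^2 := Real.sq_sqrt hpos.le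
    set u : Fin (n+1) → ℂ := ((r⁻¹ : ℝ) : ℂ) • v with hu
    have hsu : star u = ((r⁻¹ : ℝ) : ℂ) • star v := by
      rw [hu, star_smul]; simp
    have huu : dotProduct (star u) u = 1 := by
      rw [hsu, hu, smul_dotProduct, dotProduct_smul, hvv, smul_eq_mul,
        smul_eq_mul]
      norm_cast
      rw [← hr2]
      field_simp
    have := hbM u huu
    rw [hsu, hu, Matrix.mulVec_smul, smul_dotProduct, dotProduct_smul,
      hvMv, smul_eq_mul, smul_eq_mul, norm_mul, norm_mul, Complex.norm_real, Real.norm_eq_abs,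
      abs_of_pos (inv_pos.mpr hrpos)] at this
    calc ‖c + (t:ℂ)*s + (t:ℂ)^2*d‖
        = (r * r) * (r⁻¹ * (r⁻¹ * ‖c + (t:ℂ)*s + (t:ℂ)^2*d‖)) := by
          field_simp
      _ ≤ (r * r) * 1 := mul_le_mul_of_nonneg_left this (by positivity)
      _ = 1 + t^2 := by rw [mul_one, ← sq]; exact hr2
  have hz : ∀ j : Fin n,
      (starRingEnd ℂ) c * M 0 j.succ + c * (starRingEnd ℂ) (M j.succ 0) = 0 := by
    intro j
    have h1 := hkey j 1 (by simp)
    have hI := hkey j Complex.I (by simp)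
    apply Complex.ext <;>
    · simp only [Complex.one_re, Complex.one_im, Complex.I_re, Complex.I_im,
        Complex.add_re, Complex.add_im, Complex.mul_re, Complex.mul_im,
        Complex.conj_re, Complex.conj_im, Complex.zero_re, Complex.zero_im,
        one_mul, zero_mul, mul_one, mul_zero] at h1 hI ⊢
      ring_nf at h1 hI ⊢
      linarith
  refine ⟨fun j => c * (starRingEnd ℂ) (M 0 j.succ),
    fun i j => (starRingEnd ℂ) c * M i.succ j.succ, hM00, ?_, ?_, ?_⟩
  · intro j
    simp only [Complex.star_def, _root_.map_mul, Complex.conj_conj]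
    linear_combination (-(M 0 j.succ)) * hcc
  · intro i
    have h' := congrArg (starRingEnd ℂ) (hz i)
    simp only [map_add, _root_.map_mul, Complex.conj_conj, map_zero] at h'
    linear_combination c * h' - (M i.succ 0) * hcc
  · intro i j
    linear_combination (-(M i.succ j.succ)) * hcc
end

section
/- Let X = [[0,2,0],[0,0,1],[0,0,0]] ∈ M_3(ℂ). Then the numerical radius of X ⊗ X equals √4.25, i.e., w(X ⊗ X) = √(17)/2. -/
open Matrix Kronecker

lemma expand_quad (u : Fin 3 × Fin 3 → ℂ) :
    dotProduct (star u) (((!![0, 2, 0; 0, 0, 1; 0, 0, 0] : Matrix (Fin 3) (Fin 3) ℂ) ⊗ₖ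
      !![0, 2, 0; 0, 0, 1; 0, 0, 0]).mulVec u) =
      4 * (starRingEnd ℂ) (u (0,0)) * u (1,1) + 2 * (starRingEnd ℂ) (u (0,1)) * u (1,2)
      + 2 * (starRingEnd ℂ) (u (1,0)) * u (2,1) + (starRingEnd ℂ) (u (1,1)) * u (2,2) := by
  simp [dotProduct, Matrix.mulVec, Fintype.sum_prod_type, Fin.sum_univ_three,
    Matrix.kroneckerMap_apply, Matrix.vecHead, Matrix.vecTail]
  ring

lemma norm_expand (u : Fin 3 × Fin 3 → ℂ) (hu : dotProduct (star u) u = 1) :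
    norm (u (0,0))^2 + norm (u (0,1))^2 + norm (u (0,2))^2
    + norm (u (1,0))^2 + norm (u (1,1))^2 + norm (u (1,2))^2
    + norm (u (2,0))^2 + norm (u (2,1))^2 + norm (u (2,2))^2 = 1 := by
  have e : ∀ z : ℂ, (starRingEnd ℂ) z * z = (norm z : ℂ)^2 := by
    intro z; rw [mul_comm, Complex.mul_conj, ← Complex.sq_norm]; norm_cast
  simp only [dotProduct, Fintype.sum_prod_type, Fin.sum_univ_three, Pi.star_apply,
    RCLike.star_def, e] at hu
  have : ((norm (u (0,0))^2 + norm (u (0,1))^2 + norm (u (0,2))^2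
    + norm (u (1,0))^2 + norm (u (1,1))^2 + norm (u (1,2))^2
    + norm (u (2,0))^2 + norm (u (2,1))^2 + norm (u (2,2))^2 : ℝ) : ℂ) = 1 := by
    push_cast; linear_combination hu
  exact_mod_cast this

lemma abs4 (w x y z : ℂ) : norm (w + x + y + z) ≤
    norm w + norm x + norm y + norm z := by
  calc norm (w + x + y + z) ≤ norm (w + x + y) + norm z :=
        norm_add_le _ _
    _ ≤ norm (w + x) + norm y + norm z := by
        have := norm_add_le (w + x) y; linarith
    _ ≤ norm w + norm x + norm y + norm z := by
        have := norm_add_le w x; linarith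

set_option maxHeartbeats 2000000 in
lemma keyineq (s a b c d e f g o h : ℝ) (hs0 : 0 < s) (hs : s^2 = 17) (hs2 : 2 ≤ s)
    (h1 : a^2 + b^2 + o^2 + c^2 + d^2 + e^2 + h^2 + f^2 + g^2 = 1) :
    4 * (a * d) + 2 * (b * e) + 2 * (c * f) + d * g ≤ s / 2 := by
  have hss : s * s = 17 := by nlinarith
  have i1 : s * (8 * (a * d) + 2 * (d * g)) ≤ 17 * (a^2 + d^2 + g^2) := by
    have hd2 : s^2 * d^2 = 17 * d^2 := by rw [hs]
    nlinarith [sq_nonneg (s * d - 4 * a - g), sq_nonneg (a - 4 * g), hd2]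
  have eq1 : s * (s * (a^2 + d^2 + g^2)) = 17 * (a^2 + d^2 + g^2) := by
    rw [← mul_assoc, hss]
  have i1' : 8 * (a * d) + 2 * (d * g) ≤ s * (a^2 + d^2 + g^2) :=
    le_of_mul_le_mul_left (by rw [eq1]; exact i1) hs0
  have i2 : 4 * (b * e) ≤ s * (b^2 + e^2) := by
    nlinarith [sq_nonneg (b - e), mul_nonneg (by linarith : (0:ℝ) ≤ s - 2) (sq_nonneg b),
      mul_nonneg (by linarith : (0:ℝ) ≤ s - 2) (sq_nonneg e)]
  have i3 : 4 * (c * f) ≤ s * (c^2 + f^2) := by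
    nlinarith [sq_nonneg (c - f), mul_nonneg (by linarith : (0:ℝ) ≤ s - 2) (sq_nonneg c),
      mul_nonneg (by linarith : (0:ℝ) ≤ s - 2) (sq_nonneg f)]
  have hs1 : s * (a^2 + b^2 + o^2 + c^2 + d^2 + e^2 + h^2 + f^2 + g^2) = s := by
    rw [h1, mul_one]
  nlinarith [i1', i2, i3, mul_nonneg hs0.le (sq_nonneg o), mul_nonneg hs0.le (sq_nonneg h), hs1]

theorem radius_XkronX :
    let X : Matrix (Fin 3) (Fin 3) ℂ := !![0, 2, 0; 0, 0, 1; 0, 0, 0]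
    numRadius (X ⊗ₖ X) = Real.sqrt 17 / 2 := by
  intro X
  have hs0 : (0:ℝ) < Real.sqrt 17 := Real.sqrt_pos.mpr (by norm_num)
  have hs : Real.sqrt 17 ^ 2 = 17 := Real.sq_sqrt (by norm_num)
  have hs2 : (2:ℝ) ≤ Real.sqrt 17 := by nlinarith
  have expandX : ∀ u : Fin 3 × Fin 3 → ℂ,
      dotProduct (star u) ((X ⊗ₖ X).mulVec u) =
      4 * (starRingEnd ℂ) (u (0,0)) * u (1,1) + 2 * (starRingEnd ℂ) (u (0,1)) * u (1,2)
      + 2 * (starRingEnd ℂ) (u (1,0)) * u (2,1) + (starRingEnd ℂ) (u (1,1)) * u (2,2) :=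
    expand_quad
  -- upper bound
  have ub : ∀ r ∈ {r | ∃ z ∈ numRange (X ⊗ₖ X), r = norm z}, r ≤ Real.sqrt 17 / 2 := by
    rintro r ⟨z, ⟨u, hu, rfl⟩, rfl⟩
    rw [expandX u]
    have h1 := norm_expand u hu
    have tri : norm (4 * (starRingEnd ℂ) (u (0,0)) * u (1,1)
        + 2 * (starRingEnd ℂ) (u (0,1)) * u (1,2)
        + 2 * (starRingEnd ℂ) (u (1,0)) * u (2,1) + (starRingEnd ℂ) (u (1,1)) * u (2,2)) ≤
        4 * (norm (u (0,0)) * norm (u (1,1)))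
        + 2 * (norm (u (0,1)) * norm (u (1,2)))
        + 2 * (norm (u (1,0)) * norm (u (2,1)))
        + norm (u (1,1)) * norm (u (2,2)) := by
      refine le_trans (abs4 _ _ _ _) (le_of_eq ?_)
      simp only [norm_mul, Complex.norm_conj, Complex.norm_ofNat]
      ring
    have key := keyineq (Real.sqrt 17) (norm (u (0,0))) (norm (u (0,1)))
      (norm (u (1,0))) (norm (u (1,1))) (norm (u (1,2)))
      (norm (u (2,1))) (norm (u (2,2))) (norm (u (0,2)))
      (norm (u (2,0))) hs0 hs hs2 (by linarith [h1])
    linarith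
  -- the witness vector
  have h17 : Real.sqrt 17 * Real.sqrt 17 = 17 := Real.mul_self_sqrt (by norm_num)
  have h2' : Real.sqrt 2 * Real.sqrt 2 = 2 := Real.mul_self_sqrt (by norm_num)
  have h2pos : (0:ℝ) < Real.sqrt 2 := Real.sqrt_pos.mpr (by norm_num)
  have h34 : Real.sqrt 34 = Real.sqrt 17 * Real.sqrt 2 := by
    rw [← Real.sqrt_mul (by norm_num : (0:ℝ) ≤ 17)]; norm_num
  have h34pos : (0:ℝ) < Real.sqrt 34 := Real.sqrt_pos.mpr (by norm_num)
  set x : ℝ := 4 / Real.sqrt 34 with hx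
  set y : ℝ := Real.sqrt 2 / 2 with hy
  set z : ℝ := 1 / Real.sqrt 34 with hz
  have hval : 4 * x * y + y * z = Real.sqrt 17 / 2 := by
    rw [hx, hy, hz, h34]
    field_simp
    linear_combination (-1 : ℝ) * h17
  have hxyz : x^2 + y^2 + z^2 = 1 := by
    rw [hx, hy, hz]
    have e34 : Real.sqrt 34 ^ 2 = 34 := Real.sq_sqrt (by norm_num)
    field_simp [e34]
    norm_num
  set u0 : Fin 3 × Fin 3 → ℂ := fun p =>
    if p = (0,0) then (x:ℂ) else if p = (1,1) then (y:ℂ) else if p = (2,2) then (z:ℂ) else 0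
    with hu0
  have hnorm : dotProduct (star u0) u0 = 1 := by
    simp only [dotProduct, Fintype.sum_prod_type, Fin.sum_univ_three, Pi.star_apply, hu0]
    norm_num [Complex.conj_ofReal, ← Complex.ofReal_mul, Prod.ext_iff, Fin.ext_iff]
    exact_mod_cast congrArg Complex.ofReal (by nlinarith [hxyz] : x*x + y*y + z*z = 1)
  have hquad : dotProduct (star u0) ((X ⊗ₖ X).mulVec u0) = ((Real.sqrt 17 / 2 : ℝ) : ℂ) := by
    rw [expandX u0]
    simp only [hu0]
    norm_num [Complex.conj_ofReal, Prod.ext_iff, Fin.ext_iff]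
    have h := congrArg Complex.ofReal hval; push_cast at h; exact h
  have mem : Real.sqrt 17 / 2 ∈ {r | ∃ z ∈ numRange (X ⊗ₖ X), r = norm z} := by
    refine ⟨((Real.sqrt 17 / 2 : ℝ) : ℂ), ⟨u0, hnorm, hquad.symm⟩, ?_⟩
    rw [Complex.norm_real, Real.norm_eq_abs, abs_of_nonneg (by positivity)]
  exact le_antisymm (csSup_le ⟨Real.sqrt 17 / 2, mem⟩ ub) (le_csSup ⟨Real.sqrt 17 / 2, ub⟩ mem)
end

section
/- Let X = [[0,2,0],[0,0,1],[0,0,0]] ∈ M_3(ℂ). Then w(X ⊗ Xᵗ) = 2, where Xᵗ is the transpose of X. -/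
open Matrix Kronecker

lemma Xt_eq : (!![0, 2, 0; 0, 0, 1; 0, 0, 0] : Matrix (Fin 3) (Fin 3) ℂ)ᵀ = !![0,0,0;2,0,0;0,1,0] := by
  ext i j; fin_cases i <;> fin_cases j <;> rfl

lemma quad_eq (u : Fin 3 × Fin 3 → ℂ) :
    dotProduct (star u) (((!![0, 2, 0; 0, 0, 1; 0, 0, 0] : Matrix (Fin 3) (Fin 3) ℂ) ⊗ₖ (!![0, 2, 0; 0, 0, 1; 0, 0, 0] : Matrix (Fin 3) (Fin 3) ℂ)ᵀ).mulVec u)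
    = 4 * (starRingEnd ℂ) (u (0,1)) * u (1,0) + 2 * (starRingEnd ℂ) (u (0,2)) * u (1,1)
      + 2 * (starRingEnd ℂ) (u (1,1)) * u (2,0) + (starRingEnd ℂ) (u (1,2)) * u (2,1) := by
  rw [Xt_eq]
  simp [dotProduct, Matrix.mulVec, Fintype.sum_prod_type, Fin.sum_univ_three,
    Matrix.kroneckerMap_apply, Matrix.vecHead, Matrix.vecTail]
  ring

lemma e_lem (z : ℂ) : ‖z‖ ^ 2 = ((starRingEnd ℂ) z * z).re := by
  rw [← Complex.normSq_eq_conj_mul_self, Complex.ofReal_re, Complex.sq_norm]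

lemma norm_eq (u : Fin 3 × Fin 3 → ℂ) (h : dotProduct (star u) u = 1) :
    ‖u (0,0)‖ ^ 2 + ‖u (0,1)‖ ^ 2 + ‖u (0,2)‖ ^ 2
    + ‖u (1,0)‖ ^ 2 + ‖u (1,1)‖ ^ 2 + ‖u (1,2)‖ ^ 2
    + ‖u (2,0)‖ ^ 2 + ‖u (2,1)‖ ^ 2 + ‖u (2,2)‖ ^ 2 = 1 := by
  simp only [dotProduct, Fintype.sum_prod_type, Fin.sum_univ_three, Pi.star_apply,
    RCLike.star_def] at h
  have h2 := congrArg Complex.re h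
  simp only [Complex.add_re, Complex.one_re] at h2
  rw [← h2]
  simp only [e_lem]
  ring

noncomputable def cval : ℂ := ((Real.sqrt 2)⁻¹ : ℝ)

lemma hc2 : cval * cval = 1/2 := by
  unfold cval
  rw [← Complex.ofReal_mul, ← mul_inv, Real.mul_self_sqrt (by norm_num)]
  norm_num

lemma hcconj : (starRingEnd ℂ) cval = cval := Complex.conj_ofReal _

noncomputable def vwit : Fin 3 × Fin 3 → ℂ := fun p => if p = (0,1) ∨ p = (1,0) then cval else 0

lemma hv1 : dotProduct (star vwit) vwit = 1 := by
  simp only [dotProduct, Fintype.sum_prod_type, Fin.sum_univ_three, Pi.star_apply,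
    RCLike.star_def, vwit]
  norm_num [Prod.ext_iff, hcconj, show ((2:Fin 3) = 1) ↔ False from by decide,
    show ((2:Fin 3) = 0) ↔ False from by decide]
  rw [hc2]; norm_num

theorem radius_XkronXt :
    let X : Matrix (Fin 3) (Fin 3) ℂ := !![0, 2, 0; 0, 0, 1; 0, 0, 0]
    numRadius (X ⊗ₖ Xᵀ) = 2 := by
  intro X
  apply IsGreatest.csSup_eq
  constructor
  · refine ⟨2, ⟨vwit, hv1, ?_⟩, by simp⟩
    rw [quad_eq]
    simp only [vwit]
    norm_num [Prod.ext_iff, hcconj, show ((2:Fin 3) = 1) ↔ False from by decide,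
      show ((2:Fin 3) = 0) ↔ False from by decide]
    rw [mul_assoc, hc2]; norm_num
  · rintro r ⟨z, ⟨u, hu, hz⟩, rfl⟩
    rw [hz, quad_eq]
    have hn := norm_eq u hu
    have habs : ‖4 * (starRingEnd ℂ) (u (0,1)) * u (1,0) + 2 * (starRingEnd ℂ) (u (0,2)) * u (1,1)
      + 2 * (starRingEnd ℂ) (u (1,1)) * u (2,0) + (starRingEnd ℂ) (u (1,2)) * u (2,1)‖
      ≤ 4 * ‖u (0,1)‖ * ‖u (1,0)‖
        + 2 * ‖u (0,2)‖ * ‖u (1,1)‖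
        + 2 * ‖u (1,1)‖ * ‖u (2,0)‖
        + ‖u (1,2)‖ * ‖u (2,1)‖ := by
      calc _ ≤ ‖4 * (starRingEnd ℂ) (u (0,1)) * u (1,0)‖ + ‖2 * (starRingEnd ℂ) (u (0,2)) * u (1,1)‖
            + ‖2 * (starRingEnd ℂ) (u (1,1)) * u (2,0)‖ + ‖(starRingEnd ℂ) (u (1,2)) * u (2,1)‖ := by
              apply le_trans (norm_add_le _ _)
              gcongr
              apply le_trans (norm_add_le _ _)
              gcongr
              exact norm_add_le _ _
        _ = _ := by
              simp only [norm_mul, Complex.norm_conj]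
              norm_num
    refine le_trans habs ?_
    nlinarith [sq_nonneg (‖u (0,1)‖ - ‖u (1,0)‖),
      sq_nonneg (‖u (0,2)‖ + ‖u (2,0)‖ - ‖u (1,1)‖),
      sq_nonneg (‖u (0,2)‖ - ‖u (2,0)‖),
      sq_nonneg (‖u (1,2)‖ - ‖u (2,1)‖),
      sq_nonneg (‖u (0,0)‖), sq_nonneg (‖u (2,2)‖),
      sq_nonneg (‖u (1,2)‖), sq_nonneg (‖u (2,1)‖),
      norm_nonneg (u (1,1)), norm_nonneg (u (0,2)), norm_nonneg (u (2,0)),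
      norm_nonneg (u (1,2)), norm_nonneg (u (2,1)),
      norm_nonneg (u (0,1)), norm_nonneg (u (1,0))]
end

section
/- Let X = [[0,2,0],[0,0,1],[0,0,0]] ∈ M_3(ℂ). Then w(X ⊗ X) ≠ w(X ⊗ Xᵗ); hence the partial transpose map A ⊗ B ↦ A ⊗ Bᵗ does not preserve the numerical radius of tensor products in M_3 ⊗ M_3. -/
open Matrix Kronecker

private lemma unit_sum_sq (u : Fin 3 × Fin 3 → ℂ) (h : dotProduct (star u) u = 1) :
    (‖u (0,0)‖)^2 + (‖u (0,1)‖)^2 + (‖u (0,2)‖)^2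
    + (‖u (1,0)‖)^2 + (‖u (1,1)‖)^2 + (‖u (1,2)‖)^2
    + (‖u (2,0)‖)^2 + (‖u (2,1)‖)^2 + (‖u (2,2)‖)^2 = 1 := by
  have h' : ((‖u (0,0)‖:ℂ))^2 + (‖u (0,1)‖:ℂ)^2 + (‖u (0,2)‖:ℂ)^2
    + (‖u (1,0)‖:ℂ)^2 + (‖u (1,1)‖:ℂ)^2 + (‖u (1,2)‖:ℂ)^2
    + (‖u (2,0)‖:ℂ)^2 + (‖u (2,1)‖:ℂ)^2 + (‖u (2,2)‖:ℂ)^2 = 1 := by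
    simpa [dotProduct, Fintype.sum_prod_type, Fin.sum_univ_three, Complex.conj_mul',
      add_assoc] using h
  exact_mod_cast h'

private lemma abs_four_term (c₁ c₂ c₃ : ℝ) (a b c d e f g h : ℂ)
    (hc₁ : 0 ≤ c₁) (hc₂ : 0 ≤ c₂) (hc₃ : 0 ≤ c₃) :
    ‖(c₁:ℂ) * (starRingEnd ℂ) a * b + (c₂:ℂ) * (starRingEnd ℂ) c * d
      + (c₃:ℂ) * (starRingEnd ℂ) e * f + (starRingEnd ℂ) g * h‖ ≤
      c₁ * ‖a‖ * ‖b‖ + c₂ * ‖c‖ * ‖d‖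
      + c₃ * ‖e‖ * ‖f‖ + ‖g‖ * ‖h‖ := by
  calc ‖(c₁:ℂ) * (starRingEnd ℂ) a * b + (c₂:ℂ) * (starRingEnd ℂ) c * d
      + (c₃:ℂ) * (starRingEnd ℂ) e * f + (starRingEnd ℂ) g * h‖
      ≤ ‖(c₁:ℂ) * (starRingEnd ℂ) a * b + (c₂:ℂ) * (starRingEnd ℂ) c * d
        + (c₃:ℂ) * (starRingEnd ℂ) e * f‖ + ‖(starRingEnd ℂ) g * h‖ :=
        norm_add_le _ _
    _ ≤ (‖(c₁:ℂ) * (starRingEnd ℂ) a * b + (c₂:ℂ) * (starRingEnd ℂ) c * d‖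
        + ‖(c₃:ℂ) * (starRingEnd ℂ) e * f‖) + ‖(starRingEnd ℂ) g * h‖ := by
        gcongr; exact norm_add_le _ _
    _ ≤ ((‖(c₁:ℂ) * (starRingEnd ℂ) a * b‖ + ‖(c₂:ℂ) * (starRingEnd ℂ) c * d‖)
        + ‖(c₃:ℂ) * (starRingEnd ℂ) e * f‖) + ‖(starRingEnd ℂ) g * h‖ := by
        gcongr; exact norm_add_le _ _
    _ = c₁ * ‖a‖ * ‖b‖ + c₂ * ‖c‖ * ‖d‖
      + c₃ * ‖e‖ * ‖f‖ + ‖g‖ * ‖h‖ := by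
        simp [norm_mul, Complex.norm_real, Real.norm_eq_abs, abs_of_nonneg, hc₁, hc₂, hc₃]

theorem radius_kron_ne_kron_transpose :
    let X : Matrix (Fin 3) (Fin 3) ℂ := !![0, 2, 0; 0, 0, 1; 0, 0, 0]
    numRadius (X ⊗ₖ X) ≠ numRadius (X ⊗ₖ Xᵀ) := by
  intro X
  -- quadratic form of X ⊗ₖ Xᵀ
  have hformT : ∀ u : Fin 3 × Fin 3 → ℂ,
      dotProduct (star u) ((X ⊗ₖ Xᵀ).mulVec u) =
      4 * (starRingEnd ℂ) (u (0,1)) * u (1,0) + 2 * (starRingEnd ℂ) (u (0,2)) * u (1,1)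
      + 2 * (starRingEnd ℂ) (u (1,1)) * u (2,0) + (starRingEnd ℂ) (u (1,2)) * u (2,1) := by
    intro u
    have hXt : Xᵀ = !![0,0,0;(2:ℂ),0,0;0,1,0] := by
      ext i j; fin_cases i <;> fin_cases j <;> rfl
    rw [hXt]
    simp [X, dotProduct, Matrix.mulVec, Matrix.kroneckerMap_apply, Fintype.sum_prod_type,
      Fin.sum_univ_three, Matrix.vecHead, Matrix.vecTail]
    ring
  -- quadratic form of X ⊗ₖ X
  have hform : ∀ u : Fin 3 × Fin 3 → ℂ,
      dotProduct (star u) ((X ⊗ₖ X).mulVec u) =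
      4 * (starRingEnd ℂ) (u (0,0)) * u (1,1) + 2 * (starRingEnd ℂ) (u (0,1)) * u (1,2)
      + 2 * (starRingEnd ℂ) (u (1,0)) * u (2,1) + (starRingEnd ℂ) (u (1,1)) * u (2,2) := by
    intro u
    simp [X, dotProduct, Matrix.mulVec, Matrix.kroneckerMap_apply, Fintype.sum_prod_type,
      Fin.sum_univ_three, Matrix.vecHead, Matrix.vecTail]
    ring
  -- upper bound : numRadius (X ⊗ₖ Xᵀ) ≤ 2
  have h1 : numRadius (X ⊗ₖ Xᵀ) ≤ 2 := by
    apply Real.sSup_le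
    · rintro r ⟨z, ⟨u, hu, rfl⟩, rfl⟩
      have hsq := unit_sum_sq u hu
      rw [hformT u]
      have hb := abs_four_term 4 2 2 (u (0,1)) (u (1,0)) (u (0,2)) (u (1,1)) (u (1,1)) (u (2,0))
        (u (1,2)) (u (2,1)) (by norm_num) (by norm_num) (by norm_num)
      refine le_trans (by exact_mod_cast hb) ?_
      nlinarith [sq_nonneg (‖u (0,1)‖ - ‖u (1,0)‖),
        sq_nonneg (‖u (0,2)‖ - ‖u (1,1)‖),
        sq_nonneg (‖u (1,1)‖ - ‖u (2,0)‖),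
        sq_nonneg (‖u (1,2)‖ - ‖u (2,1)‖),
        sq_nonneg (‖u (0,0)‖), sq_nonneg (‖u (2,2)‖),
        norm_nonneg (u (1,2)), norm_nonneg (u (2,1)),
        mul_nonneg (norm_nonneg (u (1,2))) (norm_nonneg (u (2,1)))]
    · norm_num
  -- lower bound : 68/33 ≤ numRadius (X ⊗ₖ X)
  have h2 : (68:ℝ)/33 ≤ numRadius (X ⊗ₖ X) := by
    set s : ℂ := (((Real.sqrt 33)⁻¹ : ℝ) : ℂ)
    set u : Fin 3 × Fin 3 → ℂ :=
      fun p => (!![4*s,0,0; 0,4*s,0; 0,0,s] : Matrix (Fin 3) (Fin 3) ℂ) p.1 p.2 with hudef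
    have hs2 : s^2 = (1/33 : ℂ) := by
      have hr : ((Real.sqrt 33)⁻¹ : ℝ)^2 = 1/33 := by
        rw [inv_pow, Real.sq_sqrt (by norm_num : (0:ℝ) ≤ 33)]
        norm_num
      rw [show s = (((Real.sqrt 33)⁻¹:ℝ):ℂ) from rfl, ← Complex.ofReal_pow, hr]
      norm_num
    have hconj : (starRingEnd ℂ) s = s := by simp [s]
    have hu : dotProduct (star u) u = 1 := by
      simp only [dotProduct, Fintype.sum_prod_type, Fin.sum_univ_three, Pi.star_apply,
        hudef]
      simp [RCLike.star_def, hconj, Matrix.vecHead, Matrix.vecTail]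
      linear_combination (33:ℂ) * hs2
    have hz : dotProduct (star u) ((X ⊗ₖ X).mulVec u) = ((68/33 : ℝ) : ℂ) := by
      rw [hform u]
      simp only [hudef]
      simp [hconj, Matrix.vecHead, Matrix.vecTail, Complex.ofReal_div, map_ofNat]
      linear_combination (68:ℂ) * hs2
    apply le_csSup
    · refine ⟨9, ?_⟩
      rintro r ⟨z, ⟨v, hv, rfl⟩, rfl⟩
      have hsq := unit_sum_sq v hv
      rw [hform v]
      have hb := abs_four_term 4 2 2 (v (0,0)) (v (1,1)) (v (0,1)) (v (1,2)) (v (1,0)) (v (2,1))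
        (v (1,1)) (v (2,2)) (by norm_num) (by norm_num) (by norm_num)
      refine le_trans (by exact_mod_cast hb) ?_
      nlinarith [sq_nonneg (‖v (0,0)‖ - ‖v (1,1)‖),
        sq_nonneg (‖v (0,1)‖ - ‖v (1,2)‖),
        sq_nonneg (‖v (1,0)‖ - ‖v (2,1)‖),
        sq_nonneg (‖v (1,1)‖ - ‖v (2,2)‖),
        sq_nonneg (‖v (0,2)‖), sq_nonneg (‖v (2,0)‖),
        mul_nonneg (norm_nonneg (v (1,1))) (norm_nonneg (v (2,2)))]
    · refine ⟨((68/33 : ℝ) : ℂ), ⟨u, hu, hz.symm⟩, ?_⟩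
      rw [Complex.norm_real, Real.norm_eq_abs, abs_of_nonneg (by norm_num)]
  intro heq
  rw [heq] at h2
  linarith
end

section
/- For any A ∈ M_2(ℂ) and any B ∈ M_n(ℂ), W(A ⊗ B) = W(Aᵗ ⊗ B), where ⊗ is the Kronecker product. -/
open Matrix Kronecker

lemma numRange_conj_subset {n : Type*} [Fintype n] [DecidableEq n] (M U : Matrix n n ℂ)
    (hU : Uᴴ * U = 1) : numRange (Uᴴ * M * U) ⊆ numRange M := by
  rintro z ⟨u, hu, rfl⟩
  refine ⟨U.mulVec u, ?_, ?_⟩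
  · calc star (U.mulVec u) ⬝ᵥ (U.mulVec u)
        = (star u ᵥ* Uᴴ) ⬝ᵥ (U.mulVec u) := by rw [Matrix.star_mulVec]
      _ = star u ⬝ᵥ ((Uᴴ * U).mulVec u) := by
          rw [Matrix.dotProduct_mulVec, Matrix.vecMul_vecMul, ← Matrix.dotProduct_mulVec]
      _ = 1 := by rw [hU, Matrix.one_mulVec, hu]
  · calc star u ⬝ᵥ ((Uᴴ * M * U).mulVec u)
        = star u ⬝ᵥ (Uᴴ.mulVec ((M * U).mulVec u)) := by
          rw [Matrix.mulVec_mulVec, Matrix.mul_assoc]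
      _ = (star u ᵥ* Uᴴ) ⬝ᵥ ((M*U).mulVec u) := by rw [Matrix.dotProduct_mulVec]
      _ = star (U.mulVec u) ⬝ᵥ (M.mulVec (U.mulVec u)) := by
          rw [Matrix.star_mulVec, Matrix.mulVec_mulVec]

lemma numRange_conj_eq {n : Type*} [Fintype n] [DecidableEq n] (M U : Matrix n n ℂ)
    (hU : Uᴴ * U = 1) : numRange (Uᴴ * M * U) = numRange M := by
  refine Set.Subset.antisymm (numRange_conj_subset M U hU) ?_
  have hU' : U * Uᴴ = 1 := mul_eq_one_comm.mp hU
  have h2 : (Uᴴ)ᴴ * Uᴴ = 1 := by rw [Matrix.conjTranspose_conjTranspose]; exact hU'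
  have := numRange_conj_subset (Uᴴ * M * U) Uᴴ h2
  rwa [Matrix.conjTranspose_conjTranspose, show U * (Uᴴ * M * U) * Uᴴ = (U*Uᴴ)*M*(U*Uᴴ) by
    simp [Matrix.mul_assoc], hU', Matrix.one_mul, Matrix.mul_one] at this

lemma kron_conjT {m n : Type*} [Fintype m] [Fintype n] (U : Matrix m m ℂ) (B : Matrix n n ℂ) :
    (U ⊗ₖ B)ᴴ = Uᴴ ⊗ₖ Bᴴ := by
  ext ⟨i, j⟩ ⟨k, l⟩
  simp [Matrix.conjTranspose_apply, Matrix.kroneckerMap_apply, mul_comm]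

lemma exists_unitary_aux (A : Matrix (Fin 2) (Fin 2) ℂ) (t : ℂ) (v : ℝ)
    (ht : t * (starRingEnd ℂ) t = 1)
    (hkey : A 1 0 * t + A 0 1 * (starRingEnd ℂ) t = (v : ℂ) * (A 0 0 - A 1 1)) :
    ∃ U : Matrix (Fin 2) (Fin 2) ℂ, Uᴴ * U = 1 ∧ U * Aᵀ = A * U := by
  set x : ℝ := (Real.sqrt (1 + v ^ 2))⁻¹ with hxdef
  have hs : Real.sqrt (1 + v ^ 2) ^ 2 = 1 + v ^ 2 := Real.sq_sqrt (by positivity)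
  have hx2 : x ^ 2 * (1 + v ^ 2) = 1 := by
    rw [hxdef, inv_pow, inv_mul_eq_div, div_eq_one_iff_eq (by positivity)]
    exact hs.symm
  set y : ℝ := v * x with hydef
  have hxyR : x * x + y * y = 1 := by linear_combination hx2 + (y + v * x) * hydef
  have hxy : (x : ℂ) * (x : ℂ) + (y : ℂ) * (y : ℂ) = 1 := by exact_mod_cast hxyR
  have hyv : (y : ℂ) = (v : ℂ) * (x : ℂ) := by exact_mod_cast congrArg (Complex.ofReal) hydef
  refine ⟨!![(x:ℂ) * t, (y:ℂ); (y:ℂ), -((x:ℂ) * (starRingEnd ℂ) t)], ?_, ?_⟩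
  · ext i j
    fin_cases i <;> fin_cases j <;>
      simp [Matrix.mul_apply, Fin.sum_univ_two, Matrix.conjTranspose_apply, Matrix.one_apply,
        _root_.map_mul, mul_comm, mul_left_comm] <;>
      linear_combination ((x:ℂ) * (x:ℂ)) * ht + hxy
  · ext i j
    fin_cases i <;> fin_cases j <;>
      simp [Matrix.mul_apply, Fin.sum_univ_two, Matrix.transpose_apply]
    · ring
    · linear_combination (x:ℂ) * hkey + (A 1 1 - A 0 0) * hyv
    · linear_combination (-(x:ℂ)) * hkey + (A 0 0 - A 1 1) * hyv
    · ring

lemma exists_t_v (A : Matrix (Fin 2) (Fin 2) ℂ) (hne : A 0 0 ≠ A 1 1) :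
    ∃ (t : ℂ) (v : ℝ), t * (starRingEnd ℂ) t = 1 ∧
      A 1 0 * t + A 0 1 * (starRingEnd ℂ) t = (v : ℂ) * (A 0 0 - A 1 1) := by
  set b := A 0 1 with hb'
  set c := A 1 0 with hc'
  set δ := A 0 0 - A 1 1 with hδdef
  have hδ : δ ≠ 0 := sub_ne_zero.mpr hne
  have hδ2 : (‖δ‖ : ℂ) ≠ 0 := by simpa using ((norm_ne_zero_iff.mpr hδ))
  set W : ℂ := c * (starRingEnd ℂ) δ - (starRingEnd ℂ) b * δ with hW
  have hcW : (starRingEnd ℂ) W = (starRingEnd ℂ) c * δ - b * (starRingEnd ℂ) δ := by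
    simp [hW, map_sub, _root_.map_mul]
  by_cases hWz : W = 0
  · by_cases hc : c = 0
    · have hb : b = 0 := by
        have := hWz
        rw [hW, hc] at this
        simpa [hδ] using this
      exact ⟨1, 0, by simp, by simp [hb, hc]⟩
    · have h0 : c * (starRingEnd ℂ) δ = (starRingEnd ℂ) b * δ := by
        have := hWz; rw [hW] at this; exact sub_eq_zero.mp this
      have hc2 : (‖c‖ : ℂ) ≠ 0 := by simpa using ((norm_ne_zero_iff.mpr hc))
      have habs : ‖b‖ = ‖c‖ := by
        have := congrArg (‖·‖) h0
        simp only [norm_mul, Complex.norm_conj] at this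
        have hδ3 : ‖δ‖ ≠ 0 := (norm_ne_zero_iff.mpr hδ)
        field_simp at this
        exact this.symm
      have hcc : c * (starRingEnd ℂ) c = ((‖c‖ : ℂ))^2 := by
        rw [Complex.mul_conj, Complex.normSq_eq_norm_sq]; push_cast; ring
      have hbb : b * (starRingEnd ℂ) b = ((‖b‖ : ℂ))^2 := by
        rw [Complex.mul_conj, Complex.normSq_eq_norm_sq]; push_cast; ring
      refine ⟨(starRingEnd ℂ) c * δ / ((‖c‖ : ℂ) * (‖δ‖ : ℂ)),
        2 * ‖c‖ / ‖δ‖, ?_, ?_⟩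
      · simp only [map_div₀, _root_.map_mul, Complex.conj_ofReal, Complex.conj_conj]
        field_simp
        rw [show (starRingEnd ℂ) c * δ * c * (starRingEnd ℂ) δ
          = (c * (starRingEnd ℂ) c) * (δ * (starRingEnd ℂ) δ) by ring, hcc,
          Complex.mul_conj, Complex.normSq_eq_norm_sq]
        push_cast; ring
      · have habsC : (‖b‖ : ℂ) = (‖c‖ : ℂ) := by exact_mod_cast habs
        push_cast
        simp only [map_div₀, _root_.map_mul, Complex.conj_ofReal, Complex.conj_conj]
        field_simp
        linear_combination ((A 0 0 - A 1 1) * hcc + b * h0 + δ * hbb + δ * ((‖b‖ : ℂ) + (‖c‖ : ℂ)) * habsC + (‖c‖ : ℂ) ^ 2 * hδdef)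
  · have hWc : (‖W‖ : ℂ) ≠ 0 := by simpa using ((norm_ne_zero_iff.mpr hWz))
    have hcc : c * (starRingEnd ℂ) c = ((‖c‖ : ℂ))^2 := by
      rw [Complex.mul_conj, Complex.normSq_eq_norm_sq]; push_cast; ring
    have hbb : b * (starRingEnd ℂ) b = ((‖b‖ : ℂ))^2 := by
      rw [Complex.mul_conj, Complex.normSq_eq_norm_sq]; push_cast; ring
    refine ⟨(starRingEnd ℂ) W / (‖W‖ : ℂ),
      ((‖c‖)^2 - (‖b‖)^2) / ‖W‖, ?_, ?_⟩
    · simp only [map_div₀, _root_.map_mul, Complex.conj_ofReal, Complex.conj_conj]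
      field_simp
      rw [mul_comm, Complex.mul_conj, Complex.normSq_eq_norm_sq]
      push_cast; ring
    · push_cast
      simp only [map_div₀, _root_.map_mul, Complex.conj_ofReal, Complex.conj_conj]
      field_simp
      linear_combination c * hcW + b * hW + δ * hcc - δ * hbb

lemma exists_unitary_transpose (A : Matrix (Fin 2) (Fin 2) ℂ) :
    ∃ U : Matrix (Fin 2) (Fin 2) ℂ, Uᴴ * U = 1 ∧ U * Aᵀ = A * U := by
  by_cases hne : A 0 0 = A 1 1
  · refine ⟨!![0, 1; 1, 0], ?_, ?_⟩
    · ext i j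
      fin_cases i <;> fin_cases j <;>
        simp [Matrix.mul_apply, Fin.sum_univ_two, Matrix.conjTranspose_apply, Matrix.one_apply]
    · ext i j
      fin_cases i <;> fin_cases j <;>
        simp [Matrix.mul_apply, Fin.sum_univ_two, Matrix.transpose_apply, hne]
  · obtain ⟨t, v, ht, hkey⟩ := exists_t_v A hne
    exact exists_unitary_aux A t v ht hkey

theorem numRange_kron_transpose_left (n : ℕ) (A : Matrix (Fin 2) (Fin 2) ℂ)
    (B : Matrix (Fin n) (Fin n) ℂ) :
    numRange (A ⊗ₖ B) = numRange (Aᵀ ⊗ₖ B) := by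
  obtain ⟨U, hU, hcomm⟩ := exists_unitary_transpose A
  have hAt : Aᵀ = Uᴴ * A * U := by
    calc Aᵀ = (Uᴴ * U) * Aᵀ := by rw [hU, Matrix.one_mul]
      _ = Uᴴ * (U * Aᵀ) := by rw [Matrix.mul_assoc]
      _ = Uᴴ * (A * U) := by rw [hcomm]
      _ = Uᴴ * A * U := by rw [Matrix.mul_assoc]
  have hkU : ((U ⊗ₖ (1 : Matrix (Fin n) (Fin n) ℂ))ᴴ * (U ⊗ₖ 1) = 1) := by
    rw [kron_conjT, ← Matrix.mul_kronecker_mul, hU, Matrix.conjTranspose_one,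
      Matrix.one_mul, Matrix.one_kronecker_one]
  have hkA : Aᵀ ⊗ₖ B = (U ⊗ₖ (1 : Matrix (Fin n) (Fin n) ℂ))ᴴ * (A ⊗ₖ B) * (U ⊗ₖ 1) := by
    rw [hAt, kron_conjT, Matrix.conjTranspose_one, ← Matrix.mul_kronecker_mul,
      ← Matrix.mul_kronecker_mul, Matrix.one_mul, Matrix.mul_one]
  rw [hkA, numRange_conj_eq _ _ hkU]
end

section
/- Suppose B_1, B_2 ∈ M_N(ℂ) satisfy w(B_1 + μB_2) ≤ 1 for all complex μ with |μ| ≤ 1. If u is a unit vector with |u*B_1 u| = 1, then u*B_2 u = 0. -/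
open Matrix Kronecker

lemma numRange_bdd {n : Type*} [Fintype n] (A : Matrix n n ℂ) :
    BddAbove {r | ∃ z ∈ numRange A, r = ‖z‖} := by
  refine ⟨∑ i, ∑ j, ‖A i j‖, ?_⟩
  rintro r ⟨z, ⟨u, hu, rfl⟩, rfl⟩
  have hnormsq : ∑ j, Complex.normSq (u j) = 1 := by
    have h2 : (∑ j, (Complex.normSq (u j) : ℂ)) = 1 := by
      rw [← hu, dotProduct]
      exact Finset.sum_congr rfl fun j _ => (Complex.normSq_eq_conj_mul_self).symm ▸ rfl
    exact_mod_cast h2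
  have hui : ∀ i, ‖u i‖ ≤ 1 := by
    intro i
    have h1 : Complex.normSq (u i) ≤ 1 := by
      calc Complex.normSq (u i) ≤ ∑ j, Complex.normSq (u j) :=
            Finset.single_le_sum (fun j _ => Complex.normSq_nonneg _) (Finset.mem_univ i)
        _ = 1 := hnormsq
    nlinarith [Complex.sq_norm (u i), norm_nonneg (u i)]
  rw [dotProduct]
  calc ‖∑ i, star u i * A.mulVec u i‖
      ≤ ∑ i, ‖star u i * A.mulVec u i‖ := norm_sum_le _ _
    _ ≤ ∑ i, ∑ j, ‖A i j‖ := by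
        apply Finset.sum_le_sum
        intro i _
        rw [Matrix.mulVec, dotProduct, Pi.star_apply]
        calc ‖star (u i) * ∑ j, A i j * u j‖
            = ‖u i‖ * ‖∑ j, A i j * u j‖ := by
              rw [norm_mul]; simp
          _ ≤ 1 * ∑ j, ‖A i j * u j‖ := by
              apply mul_le_mul (hui i) (norm_sum_le _ _)
                (norm_nonneg _) zero_le_one
          _ ≤ ∑ j, ‖A i j‖ := by
              rw [one_mul]
              apply Finset.sum_le_sum
              intro j _
              rw [norm_mul]
              calc ‖A i j‖ * ‖u j‖
                  ≤ ‖A i j‖ * 1 :=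
                    mul_le_mul_of_nonneg_left (hui j) (norm_nonneg _)
                _ = _ := mul_one _

theorem claim1_diagonal (N : ℕ) (B₁ B₂ : Matrix (Fin N) (Fin N) ℂ)
    (h : ∀ μ : ℂ, ‖μ‖ ≤ 1 → numRadius (B₁ + μ • B₂) ≤ 1)
    (u : Fin N → ℂ) (hu : dotProduct (star u) u = 1)
    (hB₁ : ‖dotProduct (star u) (B₁.mulVec u)‖ = 1) :
    dotProduct (star u) (B₂.mulVec u) = 0 := by
  set a := dotProduct (star u) (B₁.mulVec u) with ha
  set b := dotProduct (star u) (B₂.mulVec u) with hb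
  have key : ∀ μ : ℂ, ‖μ‖ ≤ 1 → ‖a + μ * b‖ ≤ 1 := by
    intro μ hμ
    have hmem : ‖a + μ * b‖ ∈
        {r | ∃ z ∈ numRange (B₁ + μ • B₂), r = ‖z‖} := by
      refine ⟨a + μ * b, ⟨u, hu, ?_⟩, rfl⟩
      simp only [Matrix.add_mulVec, Matrix.smul_mulVec, dotProduct_add,
        dotProduct_smul, smul_eq_mul, ha, hb]
    have := le_csSup (numRange_bdd (B₁ + μ • B₂)) hmem
    exact this.trans (h μ hμ)
  by_contra hb0
  have habs : ‖b‖ > 0 := by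
    simpa [norm_pos_iff] using hb0
  set μ := (‖b‖ : ℂ) * a / b with hμdef
  have hμabs : ‖μ‖ = 1 := by
    rw [hμdef, norm_div, norm_mul, Complex.norm_real, Real.norm_of_nonneg habs.le, hB₁, mul_one,
      div_self (ne_of_gt habs)]
  have hval : a + μ * b = a * (1 + ‖b‖) := by
    rw [hμdef, div_mul_cancel₀ _ hb0]
    ring
  have := key μ (le_of_eq hμabs)
  rw [hval, norm_mul, hB₁, one_mul] at this
  have h1 : ‖1 + (‖b‖ : ℂ)‖ = 1 + ‖b‖ := by
    rw [← Complex.ofReal_one, ← Complex.ofReal_add, Complex.norm_real,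
      Real.norm_of_nonneg (by positivity)]
  rw [h1] at this
  linarith
end

section
/- Let B, C ∈ M_N(ℂ) with w(B) ≤ 1 and w(C) ≤ 1. Suppose u, v are unit vectors with |u*Bu| = 1 and |v*Cv| = 1, and suppose Cu = 0 and u*C = 0. Then u*v = 0. -/
open Matrix Kronecker

theorem claim2_orthogonality (N : ℕ) (B C : Matrix (Fin N) (Fin N) ℂ)
    (hB : numRadius B ≤ 1) (hC : numRadius C ≤ 1)
    (u v : Fin N → ℂ)
    (hu : dotProduct (star u) u = 1) (hv : dotProduct (star v) v = 1)
    (hBu : ‖dotProduct (star u) (B.mulVec u)‖ = 1)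
    (hCv : ‖dotProduct (star v) (C.mulVec v)‖ = 1)
    (hCu : C.mulVec u = 0) (huC : Matrix.vecMul (star u) C = 0) :
    dotProduct (star u) v = 0 := by
  set α : ℂ := dotProduct (star u) v with hα
  set z : Fin N → ℂ := v - α • u with hzdef
  have hstarz : star z = star v - (starRingEnd ℂ) α • star u := by
    simp [hzdef, star_sub, star_smul, Complex.star_def]
  -- star u ⬝ᵥ z = 0
  have huz : dotProduct (star u) z = 0 := by
    simp [hzdef, dotProduct_sub, dotProduct_smul, hu, ← hα, smul_eq_mul]
  -- star z ⬝ᵥ u = 0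
  have hvu : dotProduct (star v) u = (starRingEnd ℂ) α := by
    rw [hα]
    simp [dotProduct, map_sum, mul_comm]
  have hzu : dotProduct (star z) u = 0 := by
    rw [hstarz, sub_dotProduct, smul_dotProduct, hu, hvu, smul_eq_mul, mul_one,
      sub_self]
  -- v = z + α • u
  have hveq : v = z + α • u := by simp [hzdef]
  -- C.mulVec v = C.mulVec z
  have hCvz : C.mulVec v = C.mulVec z := by
    rw [hveq, Matrix.mulVec_add, Matrix.mulVec_smul, hCu, smul_zero, add_zero]
  -- star u ⬝ᵥ C.mulVec z = 0
  have huCz : dotProduct (star u) (C.mulVec z) = 0 := by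
    rw [Matrix.dotProduct_mulVec, huC, zero_dotProduct]
  -- star v ⬝ᵥ C.mulVec v = star z ⬝ᵥ C.mulVec z
  have hkey : dotProduct (star v) (C.mulVec v) = dotProduct (star z) (C.mulVec z) := by
    rw [hCvz, ← sub_eq_zero]
    have : star v = star z + (starRingEnd ℂ) α • star u := by
      rw [hstarz]; abel
    rw [this, add_dotProduct, smul_dotProduct, huCz, smul_zero, add_zero, sub_self]
  -- star z ⬝ᵥ z = 1 - normSq α
  have hzz : dotProduct (star z) z = ((1 - Complex.normSq α : ℝ) : ℂ) := by
    have h1 : dotProduct (star v) v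
        = dotProduct (star z) z + (starRingEnd ℂ) α * α := by
      conv_lhs => rw [hveq]
      rw [show star (z + α • u) = star z + (starRingEnd ℂ) α • star u by
        simp [star_add, star_smul, Complex.star_def]]
      rw [add_dotProduct, dotProduct_add, dotProduct_add,
        smul_dotProduct, smul_dotProduct, dotProduct_smul,
        dotProduct_smul, huz, hzu, hu]
      simp [smul_eq_mul]
    have h2 : dotProduct (star z) z = 1 - (starRingEnd ℂ) α * α := by
      rw [← h1.symm.trans hv]; ring
    rw [h2, Complex.ofReal_sub, Complex.ofReal_one, Complex.normSq_eq_conj_mul_self]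
  -- s := 1 - normSq α ; show |z*Cz| ≤ s * numRadius C when s > 0
  set s : ℝ := 1 - Complex.normSq α with hs
  have hCz1 : ‖dotProduct (star z) (C.mulVec z)‖ = 1 := by
    rw [← hkey]; exact hCv
  -- z ≠ 0
  have hzne : z ≠ 0 := by
    intro h
    rw [h] at hCz1
    simp at hCz1
  have hspos : 0 < s := by
    have hre : (dotProduct (star z) z).re = s := by rw [hzz]; simp
    have heq : dotProduct (star z) z = ∑ i, (Complex.normSq (z i) : ℂ) := by
      simp only [dotProduct, Pi.star_apply, Complex.star_def,
        Complex.normSq_eq_conj_mul_self]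
    have hseq : s = ∑ i, Complex.normSq (z i) := by
      rw [← hre, heq, Complex.re_sum]
      simp
    obtain ⟨i, hi⟩ : ∃ i, z i ≠ 0 := by
      by_contra h
      push_neg at h
      exact hzne (funext h)
    rw [hseq]
    exact Finset.sum_pos' (fun j _ => Complex.normSq_nonneg _)
      ⟨i, Finset.mem_univ i, Complex.normSq_pos.mpr hi⟩
  -- normalized vector w
  set c : ℂ := ((Real.sqrt s : ℝ) : ℂ)⁻¹ with hc
  set w : Fin N → ℂ := c • z with hw
  have hsqrt : Real.sqrt s > 0 := Real.sqrt_pos.mpr hspos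
  have hcc : (starRingEnd ℂ) c * c = ((s⁻¹ : ℝ) : ℂ) := by
    rw [hc]
    rw [← Complex.ofReal_inv, Complex.conj_ofReal, ← Complex.ofReal_mul, ← mul_inv,
      Real.mul_self_sqrt hspos.le]
  have hww : dotProduct (star w) w = 1 := by
    rw [hw, show star (c • z) = (starRingEnd ℂ) c • star z by
      simp [star_smul, Complex.star_def]]
    rw [smul_dotProduct, dotProduct_smul, smul_eq_mul, smul_eq_mul, ← mul_assoc,
      hcc, hzz, ← Complex.ofReal_mul, inv_mul_cancel₀ hspos.ne']
    simp
  have hwCw : dotProduct (star w) (C.mulVec w)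
      = ((s⁻¹ : ℝ) : ℂ) * dotProduct (star z) (C.mulVec z) := by
    rw [hw, show star (c • z) = (starRingEnd ℂ) c • star z by
      simp [star_smul, Complex.star_def]]
    rw [Matrix.mulVec_smul, smul_dotProduct, dotProduct_smul, smul_eq_mul,
      smul_eq_mul, ← mul_assoc, hcc]
  -- |w*Cw| = s⁻¹ ≤ numRadius C ≤ 1
  have hmem : ‖dotProduct (star w) (C.mulVec w)‖
      ∈ {r | ∃ zz ∈ numRange C, r = ‖zz‖} :=
    ⟨_, ⟨w, hww, rfl⟩, rfl⟩
  have hle : ‖dotProduct (star w) (C.mulVec w)‖ ≤ numRadius C :=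
    le_csSup (numRange_bdd C) hmem
  have habs : ‖dotProduct (star w) (C.mulVec w)‖ = s⁻¹ := by
    rw [hwCw, norm_mul, hCz1, mul_one, Complex.norm_real, Real.norm_eq_abs,
      abs_of_pos (inv_pos.mpr hspos)]
  have hsinv : s⁻¹ ≤ 1 := by
    rw [habs] at hle; linarith [hle.trans hC]
  have hs1 : 1 ≤ s := by
    have := mul_le_mul_of_nonneg_left hsinv hspos.le
    rwa [mul_inv_cancel₀ hspos.ne', mul_one] at this
  have hnsq : Complex.normSq α = 0 := by
    have := Complex.normSq_nonneg α
    rw [hs] at hs1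
    linarith
  show α = 0
  rwa [Complex.normSq_eq_zero] at hnsq
end

section
/- Let φ: M_{mn}(ℂ) → M_{mn}(ℂ) be linear with w(φ(A ⊗ B)) = w(A ⊗ B) for all A ∈ M_m, B ∈ M_n. Then there exist an orthonormal basis {u_{ij} : 1 ≤ i ≤ m, 1 ≤ j ≤ n} of ℂ^{mn} and complex units ξ_{ij} such that φ(E_{ii} ⊗ E_{jj}) = ξ_{ij} u_{ij} u_{ij}* for all i, j; equivalently, there is a unitary U with U*φ(E_{ii} ⊗ E_{jj})U = ξ_{ij} E_{ii} ⊗ E_{jj}. -/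
set_option linter.unusedSectionVars false
set_option maxHeartbeats 1000000

open Matrix Kronecker

namespace NRPre
open Complex

variable {P : Type*} [Fintype P] [DecidableEq P]

lemma sum_normSq_eq_one {u : P → ℂ} (hu : dotProduct (star u) u = 1) :
    ∑ i, Complex.normSq (u i) = 1 := by
  have h : (∑ i, (Complex.normSq (u i) : ℂ)) = 1 := by
    rw [← hu]; simp [dotProduct, Complex.normSq_eq_conj_mul_self]
  have := congrArg Complex.re h
  simpa using this

lemma unit_abs_le {u : P → ℂ} (hu : dotProduct (star u) u = 1) (i : P) :
    ‖u i‖ ≤ 1 := by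
  have h1 := sum_normSq_eq_one hu
  have h2 : Complex.normSq (u i) ≤ 1 := by
    rw [← h1]
    exact Finset.single_le_sum (fun j _ => Complex.normSq_nonneg _) (Finset.mem_univ i)
  have : ‖u i‖ ^ 2 ≤ 1 := by rw [Complex.sq_norm]; exact h2
  nlinarith [norm_nonneg (u i)]

lemma bddAbove_nr (A : Matrix P P ℂ) :
    BddAbove {r | ∃ z ∈ numRange A, r = ‖z‖} := by
  refine ⟨∑ i, ∑ j, ‖A i j‖, ?_⟩
  rintro r ⟨z, ⟨u, hu, rfl⟩, rfl⟩
  calc ‖dotProduct (star u) (A.mulVec u)‖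
      ≤ ∑ i, ‖(starRingEnd ℂ) (u i) * (∑ j, A i j * u j)‖ := by
        simpa [dotProduct, Matrix.mulVec] using
          norm_sum_le Finset.univ
            (fun i => (starRingEnd ℂ) (u i) * (∑ j, A i j * u j))
    _ ≤ ∑ i, ∑ j, ‖A i j‖ := by
        refine Finset.sum_le_sum fun i _ => ?_
        rw [norm_mul]
        calc ‖(starRingEnd ℂ) (u i)‖ * ‖∑ j, A i j * u j‖
            ≤ 1 * ∑ j, ‖A i j * u j‖ := by
              refine mul_le_mul ?_ (norm_sum_le _ _) (norm_nonneg _)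
                zero_le_one
              simpa using unit_abs_le hu i
          _ ≤ ∑ j, ‖A i j‖ := by
              rw [one_mul]
              refine Finset.sum_le_sum fun j _ => ?_
              rw [norm_mul]
              calc ‖A i j‖ * ‖u j‖
                  ≤ ‖A i j‖ * 1 :=
                    mul_le_mul_of_nonneg_left (unit_abs_le hu j) (norm_nonneg _)
                _ = _ := mul_one _

lemma qf_le_numRadius (A : Matrix P P ℂ) {u : P → ℂ} (hu : dotProduct (star u) u = 1) :
    ‖dotProduct (star u) (A.mulVec u)‖ ≤ numRadius A :=
  le_csSup (bddAbove_nr A) ⟨_, ⟨u, hu, rfl⟩, rfl⟩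

lemma numRadius_le (A : Matrix P P ℂ) {c : ℝ} (hc : 0 ≤ c)
    (h : ∀ u : P → ℂ, dotProduct (star u) u = 1 →
      ‖dotProduct (star u) (A.mulVec u)‖ ≤ c) :
    numRadius A ≤ c := by
  refine Real.sSup_le ?_ hc
  rintro r ⟨z, ⟨u, hu, rfl⟩, rfl⟩
  exact h u hu

lemma qf_diagonal (d : P → ℂ) (u : P → ℂ) :
    dotProduct (star u) ((Matrix.diagonal d).mulVec u)
      = ∑ i, (starRingEnd ℂ) (u i) * (d i * u i) := by
  simp [dotProduct, Matrix.mulVec_diagonal]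

lemma abs_qf_diagonal_le {d : P → ℂ} (hd : ∀ i, ‖d i‖ ≤ 1)
    {u : P → ℂ} (hu : ∑ i, Complex.normSq (u i) = 1) :
    ‖dotProduct (star u) ((Matrix.diagonal d).mulVec u)‖ ≤ 1 := by
  rw [qf_diagonal]
  calc ‖∑ i, (starRingEnd ℂ) (u i) * (d i * u i)‖
      ≤ ∑ i, ‖(starRingEnd ℂ) (u i) * (d i * u i)‖ :=
        norm_sum_le _ _
    _ ≤ ∑ i, Complex.normSq (u i) := by
        refine Finset.sum_le_sum fun i _ => ?_
        rw [norm_mul, norm_mul, Complex.norm_conj]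
        have h0 := norm_nonneg (u i)
        have : ‖u i‖ * (‖d i‖ * ‖u i‖)
            ≤ ‖u i‖ * (1 * ‖u i‖) := by
          have h1 := hd i
          nlinarith [mul_nonneg (sub_nonneg.mpr h1) (mul_nonneg h0 h0)]
        calc ‖u i‖ * (‖d i‖ * ‖u i‖)
            ≤ ‖u i‖ * (1 * ‖u i‖) := this
          _ = Complex.normSq (u i) := by rw [one_mul, ← Complex.sq_norm]; ring
    _ = 1 := hu

lemma single_unit (p : P) : dotProduct (star (Pi.single p (1:ℂ))) (Pi.single p 1) = 1 := by
  simp [dotProduct, Pi.single_apply]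

lemma qf_diagonal_single (d : P → ℂ) (p : P) :
    dotProduct (star (Pi.single p (1:ℂ))) ((Matrix.diagonal d).mulVec (Pi.single p 1))
      = d p := by
  rw [qf_diagonal]
  simp [Pi.single_apply]
lemma continuous_qf (A : Matrix P P ℂ) :
    Continuous fun u : P → ℂ => dotProduct (star u) (A.mulVec u) := by
  have : (fun u : P → ℂ => dotProduct (star u) (A.mulVec u))
      = fun u => ∑ i, (starRingEnd ℂ) (u i) * (∑ j, A i j * u j) := by
    funext u; simp [dotProduct, Matrix.mulVec]
  rw [this]
  refine continuous_finset_sum _ fun i _ => Continuous.mul ?_ ?_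
  · exact Complex.continuous_conj.comp (continuous_apply i)
  · exact continuous_finset_sum _ fun j _ => (continuous_const.mul (continuous_apply j))

lemma exists_maximizer [Nonempty P] (A : Matrix P P ℂ)
    (hb : BddAbove {r | ∃ z ∈ numRange A, r = ‖z‖})
    (hle : ∀ u : P → ℂ, dotProduct (star u) u = 1 →
      ‖dotProduct (star u) (A.mulVec u)‖ ≤ numRadius A) :
    ∃ x : P → ℂ, dotProduct (star x) x = 1 ∧
      ‖dotProduct (star x) (A.mulVec x)‖ = numRadius A := by
  classical
  set S : Set (P → ℂ) := {u | dotProduct (star u) u = 1} with hS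
  have hcont : Continuous fun u : P → ℂ => dotProduct (star u) u := by
    have he : (fun u : P → ℂ => dotProduct (star u) u)
        = fun u => ∑ i, (starRingEnd ℂ) (u i) * u i := by
      funext u; simp [dotProduct]
    rw [he]
    exact continuous_finset_sum _ fun i _ =>
      (Complex.continuous_conj.comp (continuous_apply i)).mul (continuous_apply i)
  have hclosed : IsClosed S := isClosed_singleton.preimage hcont
  have hbound : Bornology.IsBounded S := by
    refine (Metric.isBounded_iff_subset_closedBall 0).mpr ⟨1, fun u hu => ?_⟩
    rw [Metric.mem_closedBall, dist_zero_right]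
    rw [pi_norm_le_iff_of_nonneg zero_le_one]
    intro i
    -- ‖u i‖ ≤ 1
    have h1 : (∑ k, Complex.normSq (u k)) = 1 := by
      have h : (∑ k, (Complex.normSq (u k) : ℂ)) = 1 := by
        rw [← hu]; simp [dotProduct, Complex.normSq_eq_conj_mul_self]
      have := congrArg Complex.re h
      simpa using this
    have h2 : Complex.normSq (u i) ≤ 1 := by
      rw [← h1]
      exact Finset.single_le_sum (fun j _ => Complex.normSq_nonneg _) (Finset.mem_univ i)
    have h3 : ‖u i‖ ^ 2 ≤ 1 := by rw [Complex.sq_norm]; exact h2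
    have := norm_nonneg (u i)
    nlinarith
  have hcompact : IsCompact S := Metric.isCompact_of_isClosed_isBounded hclosed hbound
  have hne : S.Nonempty := by
    refine ⟨Pi.single (Classical.arbitrary P) 1, ?_⟩
    simp [hS, dotProduct, Pi.single_apply]
  obtain ⟨x, hxS, hmax⟩ := hcompact.exists_isMaxOn hne
    (continuous_norm.comp (continuous_qf A)).continuousOn
  rw [isMaxOn_iff] at hmax
  refine ⟨x, hxS, le_antisymm (hle x hxS) ?_⟩
  refine Real.sSup_le ?_ (norm_nonneg _)
  rintro r ⟨z, ⟨u, hu, rfl⟩, rfl⟩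
  exact hmax u hu
lemma unit_disk_abs {z : ℂ} (h : ∀ c : ℂ, ‖c‖ ≤ 1 → ‖1 + c * z‖ ≤ 1) :
    z = 0 := by
  by_contra hz
  have habs : 0 < ‖z‖ := norm_pos_iff.mpr hz
  have hc : ‖(starRingEnd ℂ) z / (‖z‖ : ℂ)‖ ≤ 1 := by
    rw [norm_div, Complex.norm_conj]
    simp only [Complex.norm_real, Real.norm_eq_abs, abs_of_pos habs]
    rw [div_self habs.ne']
  have h2 := h _ hc
  have he : (starRingEnd ℂ) z / (‖z‖ : ℂ) * z = (‖z‖ : ℂ) := by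
    rw [div_mul_eq_mul_div, mul_comm, Complex.mul_conj, Complex.normSq_eq_norm_sq]
    have hne : (‖z‖ : ℂ) ≠ 0 := by
      simpa using habs.ne'
    field_simp
    push_cast
    ring
  rw [he] at h2
  have h3 : (1 : ℂ) + (‖z‖ : ℂ) = ((1 + ‖z‖ : ℝ) : ℂ) := by push_cast; ring
  rw [h3, Complex.norm_real, Real.norm_eq_abs, abs_of_pos (by linarith)] at h2
  linarith

lemma first_order {L g : ℂ} {c : ℝ}
    (h : ∀ t : ℝ, ‖1 + t * L + t^2 * g‖ ≤ 1 + t^2 * c) : L.re = 0 := by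
  set C := |c| + ‖g‖ with hC
  have hC0 : 0 ≤ C := by positivity
  have hC1 : (0:ℝ) < C + 1 := by linarith
  have key : ∀ t : ℝ, t * L.re ≤ t^2 * C := by
    intro t
    have h1 := h t
    have h2 : (1 + (t:ℂ) * L + (t:ℂ)^2 * g).re ≤ ‖1 + (t:ℂ) * L + (t:ℂ)^2 * g‖ :=
      Complex.re_le_norm _
    have h3 : (1 + (t:ℂ) * L + (t:ℂ)^2 * g).re = 1 + t * L.re + t^2 * g.re := by
      simp [Complex.add_re, Complex.mul_re, Complex.ofReal_re, Complex.ofReal_im, pow_two]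
      try ring
    rw [h3] at h2
    have h5 : -‖g‖ ≤ g.re := by
      have := Complex.abs_re_le_norm g
      rcases abs_le.mp this with ⟨a, b⟩
      linarith
    have ht2 : (0:ℝ) ≤ t^2 := sq_nonneg t
    have e2 : t^2 * (-‖g‖) ≤ t^2 * g.re := mul_le_mul_of_nonneg_left h5 ht2
    have e3 : t^2 * c ≤ t^2 * |c| := mul_le_mul_of_nonneg_left (le_abs_self c) ht2
    nlinarith
  have main : ∀ ε : ℝ, 0 < ε → L.re ≤ ε ∧ -L.re ≤ ε := by
    intro ε hε
    set t := ε / (C + 1) with htdef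
    have ht : 0 < t := div_pos hε hC1
    have htC : t * C ≤ ε := by
      rw [htdef, div_mul_eq_mul_div, div_le_iff₀ hC1]
      nlinarith
    constructor
    · have k1 := key t
      have : t * L.re ≤ t * (t * C) := by nlinarith
      have := (mul_le_mul_iff_of_pos_left ht).mp this
      linarith
    · have k1 := key (-t)
      have : t * (-L.re) ≤ t * (t * C) := by nlinarith
      have := (mul_le_mul_iff_of_pos_left ht).mp this
      linarith
  have h1 : L.re ≤ 0 := by
    refine le_of_forall_pos_le_add fun ε hε => ?_
    have := (main ε hε).1; linarith
  have h2 : -L.re ≤ 0 := by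
    refine le_of_forall_pos_le_add fun ε hε => ?_
    have := (main ε hε).2; linarith
  linarith

lemma conj_dot (u v : P → ℂ) :
    (starRingEnd ℂ) (dotProduct (star u) v) = dotProduct (star v) u := by
  simp [dotProduct, map_sum]
  congr 1; funext i; ring

lemma dot_self_real (v : P → ℂ) :
    dotProduct (star v) v = ((∑ i, Complex.normSq (v i) : ℝ) : ℂ) := by
  push_cast
  simp [dotProduct, Complex.normSq_eq_conj_mul_self]

lemma dot_self_eq_zero {v : P → ℂ} (h : dotProduct (star v) v = 0) : v = 0 := by
  rw [dot_self_real] at h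
  have h2 : (∑ i, Complex.normSq (v i)) = 0 := by exact_mod_cast h
  have h3 : ∀ i ∈ Finset.univ, Complex.normSq (v i) = 0 :=
    (Finset.sum_eq_zero_iff_of_nonneg (fun i _ => Complex.normSq_nonneg _)).mp h2
  funext i
  exact Complex.normSq_eq_zero.mp (h3 i (Finset.mem_univ i))

lemma adjoint_transfer (M : Matrix P P ℂ) (u v : P → ℂ) :
    dotProduct (star u) (M.mulVec v) = dotProduct (star (Mᴴ.mulVec u)) v := by
  rw [Matrix.dotProduct_mulVec, Matrix.star_mulVec, Matrix.conjTranspose_conjTranspose]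
-- quadratic form expansion along a real line
lemma qf_expand (M : Matrix P P ℂ) (x y : P → ℂ) (t : ℝ) :
    dotProduct (star (x + (t:ℂ) • y)) (M.mulVec (x + (t:ℂ) • y))
      = dotProduct (star x) (M.mulVec x)
        + (t:ℂ) * (dotProduct (star y) (M.mulVec x)
            + dotProduct (star x) (M.mulVec y))
        + (t:ℂ)^2 * dotProduct (star y) (M.mulVec y) := by
  have hconj : star ((t:ℂ) • y) = (t:ℂ) • star y := by
    rw [star_smul]
    simp [Complex.conj_ofReal]
  rw [star_add, hconj, Matrix.mulVec_add, Matrix.mulVec_smul]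
  simp only [add_dotProduct, dotProduct_add, smul_dotProduct,
    dotProduct_smul, smul_eq_mul]
  ring

-- norm expansion for perpendicular vectors
lemma dot_self_expand (x y : P → ℂ) (t : ℝ) (hperp : dotProduct (star x) y = 0) :
    dotProduct (star (x + (t:ℂ) • y)) (x + (t:ℂ) • y)
      = dotProduct (star x) x + (t:ℂ)^2 * dotProduct (star y) y := by
  have h := qf_expand 1 x y t
  simp only [Matrix.one_mulVec] at h
  rw [h, hperp]
  have h2 : dotProduct (star y) x = 0 := by
    have := congrArg (starRingEnd ℂ) hperp
    rw [conj_dot] at this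
    simpa using this
  rw [h2]
  ring

-- scale lemma: unit ball bound implies quadratic bound
lemma qf_bound_all (M : Matrix P P ℂ)
    (h : ∀ v : P → ℂ, dotProduct (star v) v = 1 →
      ‖dotProduct (star v) (M.mulVec v)‖ ≤ 1)
    (v : P → ℂ) :
    ‖dotProduct (star v) (M.mulVec v)‖ ≤ ∑ i, Complex.normSq (v i) := by
  set s := ∑ i, Complex.normSq (v i) with hs
  have hs0 : 0 ≤ s := Finset.sum_nonneg fun i _ => Complex.normSq_nonneg _
  rcases eq_or_lt_of_le hs0 with h0 | hpos
  · have hv : v = 0 := by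
      apply dot_self_eq_zero
      rw [dot_self_real, ← hs, ← h0]
      simp
    rw [hv]
    simp [← h0]
  · set c : ℂ := (((Real.sqrt s)⁻¹ : ℝ) : ℂ) with hc
    have hr0 : 0 < Real.sqrt s := Real.sqrt_pos.mpr hpos
    have hcc : star c * c = ((s⁻¹ : ℝ) : ℂ) := by
      rw [Complex.star_def, hc, Complex.conj_ofReal, ← Complex.ofReal_mul]
      congr 1
      rw [← mul_inv]
      congr 1
      exact Real.mul_self_sqrt hs0
    have hvv : dotProduct (star (c • v)) (c • v) = 1 := by
      rw [star_smul, smul_dotProduct, dotProduct_smul, smul_eq_mul, smul_eq_mul,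
        ← mul_assoc, hcc, dot_self_real, ← hs, ← Complex.ofReal_mul,
        inv_mul_cancel₀ hpos.ne']
      norm_num
    have hq : dotProduct (star (c • v)) (M.mulVec (c • v))
        = ((s⁻¹ : ℝ) : ℂ) * dotProduct (star v) (M.mulVec v) := by
      rw [star_smul, Matrix.mulVec_smul, smul_dotProduct, dotProduct_smul,
        smul_eq_mul, smul_eq_mul, ← mul_assoc, hcc]
    have := h (c • v) hvv
    rw [hq, norm_mul, Complex.norm_real, Real.norm_eq_abs, abs_of_pos (inv_pos.mpr hpos)] at this
    calc ‖dotProduct (star v) (M.mulVec v)‖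
        = s * (s⁻¹ * ‖dotProduct (star v) (M.mulVec v)‖) := by
          field_simp
      _ ≤ s * 1 := mul_le_mul_of_nonneg_left this hs0
      _ = s := mul_one s

-- perpendicular decomposition: if w ⊥ x and w ⊥ (everything ⊥ x) then w = 0
lemma eq_zero_of_perp {x w : P → ℂ}
    (h1 : dotProduct (star x) w = 0)
    (h2 : ∀ y : P → ℂ, dotProduct (star x) y = 0 → dotProduct (star y) w = 0) :
    w = 0 := by
  apply dot_self_eq_zero
  exact h2 w h1

-- if star x ⬝ᵥ (M v) = 0 for v = x and all v ⊥ x then Mᴴ x = 0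
lemma adj_eq_zero {x : P → ℂ} {M : Matrix P P ℂ}
    (hx : dotProduct (star x) x = 1)
    (h1 : dotProduct (star x) (M.mulVec x) = 0)
    (h2 : ∀ y : P → ℂ, dotProduct (star x) y = 0 →
      dotProduct (star x) (M.mulVec y) = 0) :
    Mᴴ.mulVec x = 0 := by
  have key : ∀ v : P → ℂ, dotProduct (star (Mᴴ.mulVec x)) v = 0 := by
    intro v
    set cc := dotProduct (star x) v with hccd
    have hperp : dotProduct (star x) (v - cc • x) = 0 := by
      rw [dotProduct_sub, dotProduct_smul, hx, smul_eq_mul, mul_one, ← hccd,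
        sub_self]
    have hv : dotProduct (star x) (M.mulVec v) = 0 := by
      have hdecomp : v = (v - cc • x) + cc • x := by ring_nf
      rw [hdecomp, Matrix.mulVec_add, dotProduct_add, h2 _ hperp, Matrix.mulVec_smul,
        dotProduct_smul, h1, smul_zero, add_zero]
    rw [← adjoint_transfer]
    exact hv
  apply dot_self_eq_zero
  exact key _
lemma perp_smul {x y : P → ℂ} (c : ℂ) (h : dotProduct (star x) y = 0) :
    dotProduct (star x) (c • y) = 0 := by
  rw [dotProduct_smul, h, smul_zero]

lemma norm_line_bound {M : Matrix P P ℂ}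
    (hw : ∀ v : P → ℂ, dotProduct (star v) v = 1 →
      ‖dotProduct (star v) (M.mulVec v)‖ ≤ 1)
    {x y : P → ℂ} (hx : dotProduct (star x) x = 1)
    (hperp : dotProduct (star x) y = 0) (t : ℝ) :
    ‖dotProduct (star (x + (t:ℂ) • y)) (M.mulVec (x + (t:ℂ) • y))‖
      ≤ 1 + t^2 * (∑ i, Complex.normSq (y i)) := by
  have hball := qf_bound_all M hw (x + (t:ℂ) • y)
  have hd := dot_self_expand x y t hperp
  rw [hx, dot_self_real y] at hd
  have hsum : (∑ i, Complex.normSq ((x + (t:ℂ) • y) i))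
      = 1 + t^2 * (∑ i, Complex.normSq (y i)) := by
    have h2 : ((∑ i, Complex.normSq ((x + (t:ℂ) • y) i) : ℝ) : ℂ)
        = ((1 + t^2 * (∑ i, Complex.normSq (y i)) : ℝ) : ℂ) := by
      rw [← dot_self_real]
      rw [hd]
      push_cast
      ring
    exact_mod_cast h2
  rw [hsum] at hball
  exact hball

/-- Key first-order consequence: for `M` with unit numerical radius bound and
`⟨x, M x⟩ = 1 + w0` the linear coefficient has vanishing real part. -/
lemma line_re_zero {M : Matrix P P ℂ}
    (hw : ∀ v : P → ℂ, dotProduct (star v) v = 1 →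
      ‖dotProduct (star v) (M.mulVec v)‖ ≤ 1)
    {x y : P → ℂ} (hx : dotProduct (star x) x = 1)
    (hXx : dotProduct (star x) (M.mulVec x) = 1)
    (hperp : dotProduct (star x) y = 0) :
    (dotProduct (star y) (M.mulVec x) + dotProduct (star x) (M.mulVec y)).re
      = 0 := by
  apply first_order (g := dotProduct (star y) (M.mulVec y))
    (c := ∑ i, Complex.normSq (y i))
  intro t
  have hb := norm_line_bound hw hx hperp t
  have he := qf_expand M x y t
  rw [hXx] at he
  rw [he] at hb
  exact hb

lemma herm_eigen {X : Matrix P P ℂ} {x : P → ℂ}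
    (hx : dotProduct (star x) x = 1)
    (hXx : dotProduct (star x) (X.mulVec x) = 1)
    (hw : ∀ v : P → ℂ, dotProduct (star v) v = 1 →
      ‖dotProduct (star v) (X.mulVec v)‖ ≤ 1) :
    (X + Xᴴ).mulVec x = (2:ℂ) • x := by
  -- for every y ⊥ x : ⟨y, X x⟩ + conj ⟨x, X y⟩ = 0
  have key : ∀ y : P → ℂ, dotProduct (star x) y = 0 →
      dotProduct (star y) (X.mulVec x)
        + (starRingEnd ℂ) (dotProduct (star x) (X.mulVec y)) = 0 := by
    intro y hperp
    set a := dotProduct (star y) (X.mulVec x) with ha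
    set b := dotProduct (star x) (X.mulVec y) with hb
    have h1 : (a + b).re = 0 := line_re_zero hw hx hXx hperp
    have hperp' : dotProduct (star x) (Complex.I • y) = 0 := perp_smul _ hperp
    have h2 := line_re_zero hw hx hXx hperp'
    have e1 : dotProduct (star (Complex.I • y)) (X.mulVec x) = -Complex.I * a := by
      rw [star_smul, smul_dotProduct, ← ha]
      simp [Complex.star_def, Complex.conj_I]
    have e2 : dotProduct (star x) (X.mulVec (Complex.I • y)) = Complex.I * b := by
      rw [Matrix.mulVec_smul, dotProduct_smul, ← hb]
      simp
    rw [e1, e2] at h2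
    -- h2 : (-I a + I b).re = 0  i.e.  a.im - b.im = 0
    have h2' : a.im - b.im = 0 := by
      have : (-Complex.I * a + Complex.I * b).re = a.im - b.im := by
        simp [Complex.mul_re, Complex.I_re, Complex.I_im]
        ring
      rw [this] at h2
      exact h2
    have h1' : a.re + b.re = 0 := by
      have : (a + b).re = a.re + b.re := by simp
      rw [this] at h1
      exact h1
    apply Complex.ext
    · simp [Complex.add_re, Complex.conj_re]
      linarith
    · simp [Complex.add_im, Complex.conj_im]
      linarith
  -- conj ⟨x, X y⟩ = ⟨y, Xᴴ x⟩
  have conjswap : ∀ y : P → ℂ, (starRingEnd ℂ) (dotProduct (star x) (X.mulVec y))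
      = dotProduct (star y) (Xᴴ.mulVec x) := by
    intro y
    rw [adjoint_transfer, conj_dot]
  have hXHx : dotProduct (star x) (Xᴴ.mulVec x) = 1 := by
    rw [← conjswap x, hXx, _root_.map_one]
  set w := (X + Xᴴ).mulVec x - (2:ℂ) • x with hwdef
  have h1 : dotProduct (star x) w = 0 := by
    rw [hwdef, dotProduct_sub, Matrix.add_mulVec, dotProduct_add, hXx, hXHx,
      dotProduct_smul, hx]
    simp
    try ring
  have h2 : ∀ y : P → ℂ, dotProduct (star x) y = 0 → dotProduct (star y) w = 0 := by
    intro y hperp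
    have hyx : dotProduct (star y) x = 0 := by
      have := congrArg (starRingEnd ℂ) hperp
      rw [conj_dot] at this
      simpa using this
    rw [hwdef, dotProduct_sub, Matrix.add_mulVec, dotProduct_add,
      dotProduct_smul, hyx, smul_zero, sub_zero]
    rw [← conjswap y]
    exact key y hperp
  have := eq_zero_of_perp h1 h2
  rw [hwdef, sub_eq_zero] at this
  exact this
lemma dot_adj_zero {Y : Matrix P P ℂ} {x : P → ℂ} (h : Yᴴ.mulVec x = 0) (y : P → ℂ) :
    dotProduct (star x) (Y.mulVec y) = 0 := by
  rw [adjoint_transfer, h]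
  simp

lemma pert {X Y1 Y2 Y3 : Matrix P P ℂ} {x : P → ℂ}
    (hx : dotProduct (star x) x = 1)
    (hXx : dotProduct (star x) (X.mulVec x) = 1)
    (hY1 : Y1.mulVec x = 0) (hY1' : Y1ᴴ.mulVec x = 0)
    (hY2 : Y2.mulVec x = 0) (hY2' : Y2ᴴ.mulVec x = 0)
    (hw : ∀ a b : ℂ, ‖a‖ ≤ 1 → ‖b‖ ≤ 1 →
      ∀ v : P → ℂ, dotProduct (star v) v = 1 →
        ‖dotProduct (star v)
          ((X + a • Y1 + b • Y2 + (a*b) • Y3).mulVec v)‖ ≤ 1) :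
    Y3.mulVec x = 0 ∧ Y3ᴴ.mulVec x = 0 := by
  -- mulVec of the combination at x
  have hGx : ∀ a b : ℂ, (X + a • Y1 + b • Y2 + (a*b) • Y3).mulVec x
      = X.mulVec x + (a*b) • Y3.mulVec x := by
    intro a b
    rw [Matrix.add_mulVec, Matrix.add_mulVec, Matrix.add_mulVec,
      Matrix.smul_mulVec, Matrix.smul_mulVec, Matrix.smul_mulVec,
      hY1, hY2]
    simp
  -- ⟨x, Y3 x⟩ = 0
  have z3 : dotProduct (star x) (Y3.mulVec x) = 0 := by
    apply unit_disk_abs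
    intro c hc
    have h := hw c 1 hc (by simp) x hx
    rw [hGx, dotProduct_add, hXx, dotProduct_smul, smul_eq_mul, mul_one] at h
    exact h
  -- key vanishing for perpendicular directions
  have keyW : ∀ y : P → ℂ, dotProduct (star x) y = 0 →
      dotProduct (star y) (Y3.mulVec x)
        + dotProduct (star x) (Y3.mulVec y) = 0 := by
    intro y hperp
    set A0 := dotProduct (star y) (X.mulVec x)
      + dotProduct (star x) (X.mulVec y) with hA0
    set W := dotProduct (star y) (Y3.mulVec x)
      + dotProduct (star x) (Y3.mulVec y) with hW
    have hre : ∀ a b : ℂ, ‖a‖ ≤ 1 → ‖b‖ ≤ 1 →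
        (A0 + (a*b) * W).re = 0 := by
      intro a b ha hb
      set G := X + a • Y1 + b • Y2 + (a*b) • Y3 with hG
      have hGXx : dotProduct (star x) (G.mulVec x) = 1 := by
        rw [hG, hGx, dotProduct_add, hXx, dotProduct_smul, z3]
        simp
      have h := line_re_zero (hw a b ha hb) hx hGXx hperp
      have e1 : dotProduct (star y) (G.mulVec x)
          = dotProduct (star y) (X.mulVec x)
            + (a*b) * dotProduct (star y) (Y3.mulVec x) := by
        rw [hG, hGx, dotProduct_add, dotProduct_smul, smul_eq_mul]
      have e2 : dotProduct (star x) (G.mulVec y)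
          = dotProduct (star x) (X.mulVec y)
            + (a*b) * dotProduct (star x) (Y3.mulVec y) := by
        rw [hG, Matrix.add_mulVec, Matrix.add_mulVec, Matrix.add_mulVec,
          Matrix.smul_mulVec, Matrix.smul_mulVec, Matrix.smul_mulVec,
          dotProduct_add, dotProduct_add, dotProduct_add,
          dotProduct_smul, dotProduct_smul, dotProduct_smul,
          dot_adj_zero hY1', dot_adj_zero hY2']
        simp [smul_eq_mul]
      rw [e1, e2] at h
      have : (dotProduct (star y) (X.mulVec x)
            + (a*b) * dotProduct (star y) (Y3.mulVec x)
            + (dotProduct (star x) (X.mulVec y)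
            + (a*b) * dotProduct (star x) (Y3.mulVec y)))
          = A0 + (a*b) * W := by
        rw [hA0, hW]
        ring
      rw [this] at h
      exact h
    have r0 : A0.re = 0 := by
      have := hre 0 0 (by simp) (by simp)
      simpa using this
    have r1 : W.re = 0 := by
      have := hre 1 1 (by simp) (by simp)
      rw [one_mul, one_mul, Complex.add_re] at this
      linarith
    have rI : W.im = 0 := by
      have := hre Complex.I 1 (by simp) (by simp)
      rw [mul_one, Complex.add_re, Complex.mul_re, Complex.I_re, Complex.I_im] at this
      simp at this
      linarith
    exact Complex.ext r1 rI
  -- split into the two parts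
  have keysplit : ∀ y : P → ℂ, dotProduct (star x) y = 0 →
      dotProduct (star y) (Y3.mulVec x) = 0
        ∧ dotProduct (star x) (Y3.mulVec y) = 0 := by
    intro y hperp
    have h1 := keyW y hperp
    have hperp' : dotProduct (star x) (Complex.I • y) = 0 := perp_smul _ hperp
    have h2 := keyW _ hperp'
    have e1 : dotProduct (star (Complex.I • y)) (Y3.mulVec x)
        = -Complex.I * dotProduct (star y) (Y3.mulVec x) := by
      rw [star_smul, smul_dotProduct]
      simp [Complex.star_def, Complex.conj_I]
    have e2 : dotProduct (star x) (Y3.mulVec (Complex.I • y))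
        = Complex.I * dotProduct (star x) (Y3.mulVec y) := by
      rw [Matrix.mulVec_smul, dotProduct_smul]
      simp
    rw [e1, e2] at h2
    set u := dotProduct (star y) (Y3.mulVec x) with hu
    set w := dotProduct (star x) (Y3.mulVec y) with hwd
    have h3 : u = w := by linear_combination Complex.I * h2 + (u - w) * Complex.I_sq
    exact ⟨by linear_combination h1 / 2 + h3 / 2, by linear_combination h1 / 2 - h3 / 2⟩
  exact ⟨eq_zero_of_perp z3 (fun y hperp => (keysplit y hperp).1),
    adj_eq_zero hx z3 (fun y hperp => (keysplit y hperp).2)⟩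
lemma stdBasis_eq_diag {ι : Type*} [Fintype ι] [DecidableEq ι] (i : ι) (c : ℂ) :
    Matrix.single i i c = Matrix.diagonal (Pi.single i c) := by
  ext a b
  simp [Matrix.single, Matrix.diagonal, Pi.single_apply]
  aesop

lemma diag_two_decomp {ι : Type*} [Fintype ι] [DecidableEq ι] (i k : ι) (ca a : ℂ) :
    Matrix.diagonal (Pi.single i ca + Pi.single k a : ι → ℂ)
      = ca • Matrix.single i i (1:ℂ) + a • Matrix.single k k (1:ℂ) := by
  ext r s
  by_cases h : r = s <;>
    simp [Matrix.diagonal_apply, Matrix.single, Pi.single_apply, h] <;> aesop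

lemma single_two_abs {ι : Type*} [DecidableEq ι] {i k : ι} {ca a : ℂ}
    (h : i ≠ k ∨ a = 0) (h1 : ‖ca‖ ≤ 1) (h2 : ‖a‖ ≤ 1) (r : ι) :
    ‖((Pi.single i ca + Pi.single k a) : ι → ℂ) r‖ ≤ 1 := by
  rcases h with h | h
  · simp only [Pi.add_apply, Pi.single_apply]
    split_ifs with hi hk hk <;> simp_all
    try exact absurd (hi ▸ hk : i = k) h
  · subst h
    simp only [Pi.add_apply, Pi.single_apply]
    split_ifs <;> simp_all

lemma sandwich_apply (M U : Matrix P P ℂ) (q r : P) :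
    (Uᴴ * M * U) q r
      = dotProduct (star (fun a => U a q)) (M.mulVec (fun a => U a r)) := by
  rw [Matrix.mul_assoc, Matrix.mul_apply]
  simp only [Matrix.conjTranspose_apply, dotProduct, Matrix.mulVec, Pi.star_apply,
    Matrix.mul_apply, dotProduct]
end NRPre

open NRPre in
theorem preserver_diagonal_structure (m n : ℕ)
    (φ : Matrix (Fin m × Fin n) (Fin m × Fin n) ℂ →ₗ[ℂ] Matrix (Fin m × Fin n) (Fin m × Fin n) ℂ)
    (hφ : ∀ (A : Matrix (Fin m) (Fin m) ℂ) (B : Matrix (Fin n) (Fin n) ℂ),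
      numRadius (φ (A ⊗ₖ B)) = numRadius (A ⊗ₖ B)) :
    ∃ (u : Fin m × Fin n → Fin m × Fin n → ℂ) (ξ : Fin m × Fin n → ℂ),
      (∀ p q : Fin m × Fin n,
        dotProduct (star (u p)) (u q) = if p = q then 1 else 0) ∧
      (∀ p, ‖ξ p‖ = 1) ∧
      (∀ (i : Fin m) (j : Fin n),
        φ (Matrix.single i i 1 ⊗ₖ Matrix.single j j 1) =
          ξ (i, j) • Matrix.vecMulVec (u (i, j)) (star (u (i, j)))) := by
  classical
  rcases Nat.eq_zero_or_pos m with hm | hm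
  · subst hm
    exact ⟨fun _ _ => 0, fun _ => 1, fun p => p.1.elim0, fun p => p.1.elim0,
      fun i => i.elim0⟩
  rcases Nat.eq_zero_or_pos n with hn | hn
  · subst hn
    exact ⟨fun _ _ => 0, fun _ => 1, fun p => p.2.elim0, fun p => p.2.elim0,
      fun i j => j.elim0⟩
  haveI : Nonempty (Fin m × Fin n) := ⟨(⟨0, hm⟩, ⟨0, hn⟩)⟩
  set F : Fin m × Fin n → Matrix (Fin m × Fin n) (Fin m × Fin n) ℂ :=
    fun p => φ (Matrix.single p.1 p.1 1 ⊗ₖ Matrix.single p.2 p.2 1) with hF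
  -- master expansion of φ on products of two-diagonal matrices
  have expand : ∀ (i k : Fin m) (j l : Fin n) (ca a b : ℂ),
      φ (Matrix.diagonal (Pi.single i ca + Pi.single k a : Fin m → ℂ)
          ⊗ₖ Matrix.diagonal (Pi.single j 1 + Pi.single l b : Fin n → ℂ))
        = ca • F (i,j) + a • F (k,j) + (ca*b) • F (i,l) + (a*b) • F (k,l) := by
    intro i k j l ca a b
    rw [diag_two_decomp, diag_two_decomp]
    simp only [Matrix.add_kronecker, Matrix.kronecker_add, Matrix.smul_kronecker,
      Matrix.kronecker_smul, map_add, LinearMap.map_smul, smul_smul, hF]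
    module
  -- master quadratic-form bound
  have hwmaster : ∀ (i k : Fin m) (j l : Fin n) (ca a b : ℂ),
      (i ≠ k ∨ a = 0) → (j ≠ l ∨ b = 0) →
      ‖ca‖ ≤ 1 → ‖a‖ ≤ 1 → ‖b‖ ≤ 1 →
      ∀ v : Fin m × Fin n → ℂ, dotProduct (star v) v = 1 →
        ‖dotProduct (star v)
          ((φ (Matrix.diagonal (Pi.single i ca + Pi.single k a : Fin m → ℂ)
            ⊗ₖ Matrix.diagonal (Pi.single j 1 + Pi.single l b : Fin n → ℂ))).mulVec v)‖ ≤ 1 := by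
    intro i k j l ca a b h1 h2 hca ha hb v hv
    calc ‖_‖ ≤ numRadius (φ _) := qf_le_numRadius _ hv
      _ = numRadius _ := hφ _ _
      _ ≤ 1 := by
          rw [Matrix.diagonal_kronecker_diagonal]
          refine numRadius_le _ zero_le_one fun u hu => ?_
          refine abs_qf_diagonal_le (fun p => ?_) (sum_normSq_eq_one hu)
          rw [norm_mul]
          exact mul_le_one₀ (single_two_abs h1 hca ha p.1) (norm_nonneg _)
            (single_two_abs h2 (by norm_num) hb p.2)
  -- numerical radius of the basic images is 1
  have hFdiag : ∀ p : Fin m × Fin n,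
      Matrix.single p.1 p.1 (1:ℂ) ⊗ₖ Matrix.single p.2 p.2 (1:ℂ)
        = Matrix.diagonal (fun q : Fin m × Fin n =>
            (Pi.single p.1 1 : Fin m → ℂ) q.1 * (Pi.single p.2 1 : Fin n → ℂ) q.2) := by
    intro p
    rw [stdBasis_eq_diag, stdBasis_eq_diag, Matrix.diagonal_kronecker_diagonal]
  have nr1 : ∀ p : Fin m × Fin n, numRadius (F p) = 1 := by
    intro p
    have hge : (1:ℝ) ≤ numRadius (F p) := by
      rw [hF, hφ, hFdiag]
      have hval := qf_diagonal_single (fun q : Fin m × Fin n =>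
        (Pi.single p.1 1 : Fin m → ℂ) q.1 * (Pi.single p.2 1 : Fin n → ℂ) q.2) p
      have h1 := qf_le_numRadius (Matrix.diagonal (fun q : Fin m × Fin n =>
        (Pi.single p.1 1 : Fin m → ℂ) q.1 * (Pi.single p.2 1 : Fin n → ℂ) q.2))
        (single_unit p)
      rw [hval] at h1
      simpa using h1
    have hle : numRadius (F p) ≤ 1 := by
      refine numRadius_le _ zero_le_one fun v hv => ?_
      have heq : F p = φ (Matrix.diagonal (Pi.single p.1 (1:ℂ) + Pi.single p.1 0 : Fin m → ℂ)
          ⊗ₖ Matrix.diagonal (Pi.single p.2 (1:ℂ) + Pi.single p.2 0 : Fin n → ℂ)) := by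
        have h := expand p.1 p.1 p.2 p.2 1 0 0
        simp only [zero_smul, one_smul, add_zero, mul_zero, zero_mul] at h
        rw [h]
      rw [heq]
      exact hwmaster p.1 p.1 p.2 p.2 1 0 0 (Or.inr rfl) (Or.inr rfl) (by simp) (by simp)
        (by simp) v hv
    linarith
  -- maximizers
  have hmax : ∀ p : Fin m × Fin n, ∃ x : Fin m × Fin n → ℂ,
      dotProduct (star x) x = 1 ∧
      ‖dotProduct (star x) ((F p).mulVec x)‖ = numRadius (F p) :=
    fun p => exists_maximizer (F p) (bddAbove_nr _) (fun u hu => qf_le_numRadius _ hu)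
  choose x hxunit hxmax using hmax
  set ζ : Fin m × Fin n → ℂ := fun p => dotProduct (star (x p)) ((F p).mulVec (x p))
    with hζ
  have habs : ∀ p, ‖ζ p‖ = 1 := by
    intro p
    rw [hζ]
    simp only
    rw [hxmax p, nr1 p]
  have hζne : ∀ p, (starRingEnd ℂ) (ζ p) ≠ 0 := by
    intro p h
    have := habs p
    rw [← Complex.norm_conj, h] at this
    simp at this
  -- ⟨x p, (conj ζ p • F p) x p⟩ = 1
  have hXx : ∀ p, dotProduct (star (x p))
      (((starRingEnd ℂ) (ζ p) • F p).mulVec (x p)) = 1 := by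
    intro p
    rw [Matrix.smul_mulVec, dotProduct_smul, smul_eq_mul]
    have he : (starRingEnd ℂ) (ζ p) * (dotProduct (star (x p)) ((F p).mulVec (x p)))
        = (starRingEnd ℂ) (ζ p) * ζ p := rfl
    rw [he, ← Complex.normSq_eq_conj_mul_self, Complex.normSq_eq_norm_sq, habs p]
    norm_num
  have habs' : ∀ p, ‖(starRingEnd ℂ) (ζ p)‖ ≤ 1 := by
    intro p; rw [Complex.norm_conj, habs p]
  have hζne0 : ∀ p, ζ p ≠ 0 := by
    intro p h
    have := habs p
    rw [h] at this
    simp at this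
  -- Stage 1a : same second coordinate
  have stage1a : ∀ (i k : Fin m) (j : Fin n), k ≠ i →
      (F (k, j)).mulVec (x (i,j)) = 0 ∧ (F (k, j))ᴴ.mulVec (x (i,j)) = 0 := by
    intro i k j hk
    refine pert (Y1 := (0 : Matrix (Fin m × Fin n) (Fin m × Fin n) ℂ))
      (Y2 := (0 : Matrix (Fin m × Fin n) (Fin m × Fin n) ℂ))
      (hxunit (i,j)) (hXx (i,j)) (Matrix.zero_mulVec _) ?_ (Matrix.zero_mulVec _) ?_ ?_
    · rw [Matrix.conjTranspose_zero]; exact Matrix.zero_mulVec _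
    · rw [Matrix.conjTranspose_zero]; exact Matrix.zero_mulVec _
    · intro a b ha hb v hv
      have h := expand i k j j ((starRingEnd ℂ) (ζ (i,j))) (a*b) 0
      simp only [mul_zero, zero_smul, add_zero] at h
      have e : (starRingEnd ℂ) (ζ (i,j)) • F (i,j)
            + a • (0 : Matrix (Fin m × Fin n) (Fin m × Fin n) ℂ)
            + b • (0 : Matrix (Fin m × Fin n) (Fin m × Fin n) ℂ)
            + (a*b) • F (k,j)
          = φ (Matrix.diagonal (Pi.single i ((starRingEnd ℂ) (ζ (i,j))) + Pi.single k (a*b)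
              : Fin m → ℂ)
            ⊗ₖ Matrix.diagonal (Pi.single j 1 + Pi.single j 0 : Fin n → ℂ)) := by
        rw [h]; simp
      rw [e]
      exact hwmaster i k j j _ _ _ (Or.inl (Ne.symm hk)) (Or.inr rfl) (habs' _)
        (by rw [norm_mul]; exact mul_le_one₀ ha (norm_nonneg _) hb) (by simp) v hv
  -- Stage 1b : same first coordinate
  have stage1b : ∀ (i : Fin m) (j l : Fin n), l ≠ j →
      (F (i, l)).mulVec (x (i,j)) = 0 ∧ (F (i, l))ᴴ.mulVec (x (i,j)) = 0 := by
    intro i j l hl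
    have hp := pert (Y1 := (0 : Matrix (Fin m × Fin n) (Fin m × Fin n) ℂ))
      (Y2 := (0 : Matrix (Fin m × Fin n) (Fin m × Fin n) ℂ))
      (Y3 := (starRingEnd ℂ) (ζ (i,j)) • F (i,l))
      (hxunit (i,j)) (hXx (i,j)) (Matrix.zero_mulVec _)
      (by rw [Matrix.conjTranspose_zero]; exact Matrix.zero_mulVec _)
      (Matrix.zero_mulVec _)
      (by rw [Matrix.conjTranspose_zero]; exact Matrix.zero_mulVec _)
      ?_
    · obtain ⟨h1, h2⟩ := hp
      rw [Matrix.smul_mulVec] at h1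
      rw [Matrix.conjTranspose_smul, Matrix.smul_mulVec] at h2
      constructor
      · exact (smul_eq_zero.mp h1).resolve_left (hζne _)
      · refine (smul_eq_zero.mp h2).resolve_left ?_
        simp only [Complex.star_def, Complex.conj_conj]
        exact hζne0 _
    · intro a b ha hb v hv
      have h := expand i i j l ((starRingEnd ℂ) (ζ (i,j))) 0 (a*b)
      simp only [zero_smul, zero_mul, add_zero, smul_zero] at h
      have e : (starRingEnd ℂ) (ζ (i,j)) • F (i,j)
            + a • (0 : Matrix (Fin m × Fin n) (Fin m × Fin n) ℂ)
            + b • (0 : Matrix (Fin m × Fin n) (Fin m × Fin n) ℂ)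
            + (a*b) • ((starRingEnd ℂ) (ζ (i,j)) • F (i,l))
          = φ (Matrix.diagonal (Pi.single i ((starRingEnd ℂ) (ζ (i,j))) + Pi.single i 0
              : Fin m → ℂ)
            ⊗ₖ Matrix.diagonal (Pi.single j 1 + Pi.single l (a*b) : Fin n → ℂ)) := by
        rw [h]
        simp only [smul_zero, add_zero, smul_smul]
        module
      rw [e]
      exact hwmaster i i j l _ _ _ (Or.inr rfl) (Or.inl (Ne.symm hl)) (habs' _)
        (by simp) (by rw [norm_mul]; exact mul_le_one₀ ha (norm_nonneg _) hb) v hv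
  -- Stage 2 : both coordinates differ
  have stage2 : ∀ (i k : Fin m) (j l : Fin n), k ≠ i → l ≠ j →
      (F (k, l)).mulVec (x (i,j)) = 0 ∧ (F (k, l))ᴴ.mulVec (x (i,j)) = 0 := by
    intro i k j l hk hl
    refine pert (Y1 := F (k,j)) (Y2 := (starRingEnd ℂ) (ζ (i,j)) • F (i,l))
      (hxunit (i,j)) (hXx (i,j)) (stage1a i k j hk).1 (stage1a i k j hk).2 ?_ ?_ ?_
    · rw [Matrix.smul_mulVec, (stage1b i j l hl).1, smul_zero]
    · rw [Matrix.conjTranspose_smul, Matrix.smul_mulVec, (stage1b i j l hl).2, smul_zero]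
    · intro a b ha hb v hv
      have h := expand i k j l ((starRingEnd ℂ) (ζ (i,j))) a b
      have e : (starRingEnd ℂ) (ζ (i,j)) • F (i,j) + a • F (k,j)
            + b • ((starRingEnd ℂ) (ζ (i,j)) • F (i,l)) + (a*b) • F (k,l)
          = φ (Matrix.diagonal (Pi.single i ((starRingEnd ℂ) (ζ (i,j))) + Pi.single k a
              : Fin m → ℂ)
            ⊗ₖ Matrix.diagonal (Pi.single j 1 + Pi.single l b : Fin n → ℂ)) := by
        rw [h]
        simp only [smul_smul]
        module
      rw [e]
      exact hwmaster i k j l _ _ _ (Or.inl (Ne.symm hk)) (Or.inl (Ne.symm hl)) (habs' _)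
        ha hb v hv
  -- all off-diagonal images annihilate the maximizers
  have killed : ∀ p q : Fin m × Fin n, p ≠ q →
      (F p).mulVec (x q) = 0 ∧ (F p)ᴴ.mulVec (x q) = 0 := by
    rintro ⟨k, l⟩ ⟨i, j⟩ hne
    by_cases hk : k = i
    · subst hk
      have hl : l ≠ j := fun h => hne (by rw [h])
      exact stage1b k j l hl
    · by_cases hl : l = j
      · subst hl
        exact stage1a i k l hk
      · exact stage2 i k j l hk hl
  -- Hermitian part eigenvector equation
  have hherm : ∀ p, (((starRingEnd ℂ) (ζ p) • F p)
      + ((starRingEnd ℂ) (ζ p) • F p)ᴴ).mulVec (x p) = (2:ℂ) • x p := by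
    intro p
    refine herm_eigen (hxunit p) (hXx p) ?_
    intro v hv
    have h := expand p.1 p.1 p.2 p.2 ((starRingEnd ℂ) (ζ p)) 0 0
    simp only [zero_smul, mul_zero, zero_mul, add_zero, Prod.mk.eta] at h
    rw [← h]
    exact hwmaster p.1 p.1 p.2 p.2 _ _ _ (Or.inr rfl) (Or.inr rfl) (habs' _)
      (by simp) (by simp) v hv
  -- orthogonality of the maximizers
  have orth : ∀ p q : Fin m × Fin n, p ≠ q → dotProduct (star (x q)) (x p) = 0 := by
    intro p q hpq
    have h2 := hherm p
    have e : dotProduct (star (x q))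
          ((((starRingEnd ℂ) (ζ p) • F p) + ((starRingEnd ℂ) (ζ p) • F p)ᴴ).mulVec (x p))
        = dotProduct (star (x q)) ((2:ℂ) • x p) := by rw [h2]
    rw [adjoint_transfer] at e
    have hX : ((((starRingEnd ℂ) (ζ p) • F p)
        + ((starRingEnd ℂ) (ζ p) • F p)ᴴ)ᴴ).mulVec (x q) = 0 := by
      rw [Matrix.conjTranspose_add, Matrix.conjTranspose_conjTranspose, Matrix.add_mulVec,
        Matrix.conjTranspose_smul, Matrix.smul_mulVec, Matrix.smul_mulVec,
        (killed p q hpq).1, (killed p q hpq).2, smul_zero, smul_zero, add_zero]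
    rw [hX] at e
    simp at e
    exact e
  -- the unitary endgame
  set U : Matrix (Fin m × Fin n) (Fin m × Fin n) ℂ := Matrix.of (fun a q => x q a) with hU
  have hUU : Uᴴ * U = 1 := by
    ext q r
    rw [Matrix.mul_apply]
    simp only [Matrix.conjTranspose_apply, Matrix.of_apply, Matrix.one_apply, hU]
    by_cases h : q = r
    · subst h
      simpa [dotProduct] using hxunit q
    · have := orth r q (fun hrq => h hrq.symm)
      simp only [h, if_false]
      simpa [dotProduct] using this
  have hUUc : U * Uᴴ = 1 := mul_eq_one_comm.mp hUU
  have sandwich : ∀ p, Uᴴ * ((starRingEnd ℂ) (ζ p) • F p) * U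
      = Matrix.single p p 1 := by
    intro p
    ext q r
    rw [sandwich_apply]
    have hq : (fun a => U a q) = x q := rfl
    have hr : (fun a => U a r) = x r := rfl
    rw [hq, hr]
    by_cases hrp : r = p
    · subst hrp
      by_cases hqp : q = r
      · subst hqp
        rw [hXx q]
        simp [Matrix.single]
      · rw [adjoint_transfer, Matrix.conjTranspose_smul, Matrix.smul_mulVec,
          (killed r q (Ne.symm hqp)).2, smul_zero, star_zero, zero_dotProduct]
        simp [Matrix.single, Ne.symm hqp]
    · rw [Matrix.smul_mulVec, (killed p r (fun h => hrp h.symm)).1, smul_zero,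
        dotProduct_zero]
      have hz : Matrix.single p p (1:ℂ) q r = 0 := by
        simp only [Matrix.single, Matrix.of_apply]
        rw [if_neg]
        rintro ⟨h1, h2⟩
        exact hrp h2.symm
      rw [hz]
  have hXeq : ∀ p, (starRingEnd ℂ) (ζ p) • F p
      = U * Matrix.single p p 1 * Uᴴ := by
    intro p
    have e1 : (starRingEnd ℂ) (ζ p) • F p
        = (U * Uᴴ) * ((starRingEnd ℂ) (ζ p) • F p) * (U * Uᴴ) := by
      rw [hUUc, Matrix.one_mul, Matrix.mul_one]
    rw [e1, ← sandwich p]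
    simp only [Matrix.mul_assoc]
  have hrank1 : ∀ p, U * Matrix.single p p 1 * Uᴴ
      = Matrix.vecMulVec (x p) (star (x p)) := by
    intro p
    ext a b
    simp only [Matrix.mul_apply, Matrix.single, Matrix.vecMulVec_apply,
      Matrix.conjTranspose_apply, Matrix.of_apply, hU, Matrix.of_apply, ite_and, mul_ite,
      ite_mul, zero_mul, mul_zero, mul_one, one_mul, Finset.sum_ite_eq, Finset.sum_ite_eq',
      Finset.mem_univ, if_true, Pi.star_apply]
  refine ⟨x, ζ, ?_, habs, ?_⟩
  · intro p q
    by_cases h : p = q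
    · subst h
      simp [hxunit p]
    · rw [if_neg h]
      exact orth q p (fun hqp => h hqp.symm)
  · intro i j
    have h := hXeq (i, j)
    rw [hrank1] at h
    have hz : ζ (i,j) • ((starRingEnd ℂ) (ζ (i,j)) • F (i,j)) = F (i,j) := by
      rw [smul_smul, Complex.mul_conj, Complex.normSq_eq_norm_sq, habs]
      norm_num
    calc φ (Matrix.single i i 1 ⊗ₖ Matrix.single j j 1)
        = F (i, j) := rfl
      _ = ζ (i,j) • ((starRingEnd ℂ) (ζ (i,j)) • F (i,j)) := hz.symm
      _ = ζ (i,j) • Matrix.vecMulVec (x (i,j)) (star (x (i,j))) := by rw [h]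
end
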